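/- arXiv:1201.6076 — 2 statements merged into one kernel-verified Lean document; each statement's English description precedes it below -/
import Mathlib

section
/- Let (R, M) be a commutative local ring. Then M is finitely generated and every ideal of R is a direct sum of cyclic R-modules if and only if there exist a positive integer n and elements v₁, ..., vₙ ∈ R such that M = Rv₁ ⊕ ⋯ ⊕ Rvₙ, each R/Ann(vᵢ) is a principal ideal ring, and at most two of the Rvᵢ are not simple. -/
open Submodule IsLocalRing

set_option linter.unusedSectionVars false

/-- An ideal is an internal direct sum of cyclic `R`-modules. -/
def Ideal.IsDirectSumOfCyclics {R : Type} [CommRing R] (I : Ideal R) : Prop :=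
  ∃ (ι : Type) (x : ι → R),
    iSupIndep (fun i => Submodule.span R ({x i} : Set R)) ∧
      (⨆ i, Submodule.span R ({x i} : Set R)) = I


section Helpers

variable {R : Type} [CommRing R] [IsLocalRing R]

lemma nonunit_of_mul_eq_zero {r x : R} (hx : x ≠ 0) (h : r * x = 0) : ¬ IsUnit r := by
  intro hr
  obtain ⟨u, rfl⟩ := hr
  apply hx
  calc x = (↑u⁻¹ * u) * x := by simp
  _ = ↑u⁻¹ * (↑u * x) := by ring
  _ = 0 := by rw [h, mul_zero]

lemma mem_max_of_mul_eq_zero {r x : R} (hx : x ≠ 0) (h : r * x = 0) :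
    r ∈ maximalIdeal R := by
  rw [IsLocalRing.mem_maximalIdeal, mem_nonunits_iff]
  exact nonunit_of_mul_eq_zero hx h

lemma nonunit_iff_mem_max {r : R} : ¬ IsUnit r ↔ r ∈ maximalIdeal R := by
  rw [IsLocalRing.mem_maximalIdeal, mem_nonunits_iff]

lemma isUnit_of_one_sub_nonunit {s : R} (h : ¬ IsUnit (1 - s)) : IsUnit s := by
  rcases IsLocalRing.isUnit_or_isUnit_of_add_one (a := 1 - s) (b := s) (by ring) with h' | h'
  · exact absurd h' h
  · exact h'

lemma isUnit_add_of_nonunit {a b : R} (ha : IsUnit a) (hb : ¬ IsUnit b) : IsUnit (a + b) := by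
  by_contra h
  rw [nonunit_iff_mem_max] at h hb
  have : a ∈ maximalIdeal R := by
    have := Submodule.sub_mem _ h hb
    simpa using this
  rw [← nonunit_iff_mem_max] at this
  exact this ha

lemma mul_mem_of_mem {W : Submodule R R} (r : R) {x : R} (h : x ∈ W) : r * x ∈ W := by
  rw [← smul_eq_mul]; exact W.smul_mem r h

/-- the multiplication-by-`v` linear map -/
noncomputable abbrev mulBy (v : R) : R →ₗ[R] R := LinearMap.toSpanSingleton R R v

lemma mulBy_apply (v r : R) : mulBy v r = r * v := by
  simp [LinearMap.toSpanSingleton_apply, smul_eq_mul]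

/-- span of a unit multiple -/
lemma span_singleton_unit_mul {c x : R} (hc : IsUnit c) :
    span R ({c * x} : Set R) = span R ({x} : Set R) := by
  obtain ⟨u, hu⟩ := hc
  apply le_antisymm
  · rw [span_le, Set.singleton_subset_iff]
    exact smul_mem _ c (mem_span_singleton_self x)
  · rw [span_le, Set.singleton_subset_iff]
    rw [SetLike.mem_coe, mem_span_singleton]
    refine ⟨(↑u⁻¹ : R), ?_⟩
    rw [smul_eq_mul, ← mul_assoc, ← hu]
    simp

/-- If every summand of a finsupp-sum is a nonunit, so is the sum (it lies in the maximal
ideal). -/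
lemma sum_mem_max {κ : Type*} (c : κ →₀ R) (f : κ → R → R)
    (h : ∀ a ∈ c.support, f a (c a) ∈ maximalIdeal R) :
    c.sum f ∈ maximalIdeal R := by
  exact Submodule.sum_mem _ h

end Helpers

section PIRLemmas

variable {R : Type} [CommRing R] [IsLocalRing R]

/-- Every submodule of `span {v}` is cyclic, generated by a multiple of `v`,
when `R ⧸ Ann v` is a PIR. -/
lemma cyc_of_pir (v : R) (hPIR : IsPrincipalIdealRing (R ⧸ Ideal.torsionOf R R v))
    (W : Submodule R R) (hW : W ≤ span R {v}) : ∃ c : R, W = span R ({c * v} : Set R) := by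
  classical
  set q := Ideal.Quotient.mk (Ideal.torsionOf R R v) with hq
  set Q : Ideal R := Submodule.comap (mulBy v) W with hQdef
  have hkerQ : Ideal.torsionOf R R v ≤ Q := by
    intro r hr
    rw [Ideal.mem_torsionOf_iff] at hr
    simp only [hQdef, Submodule.mem_comap]
    rw [show (mulBy v) r = r • v from rfl, hr]
    exact W.zero_mem
  obtain ⟨g, hg⟩ := (hPIR.principal (Ideal.map q Q)).principal
  obtain ⟨c, hc⟩ := Ideal.Quotient.mk_surjective g
  have hQeq : Q = Ideal.comap q (Ideal.map q Q) := by
    rw [Ideal.comap_map_of_surjective q Ideal.Quotient.mk_surjective]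
    have : Ideal.comap q ⊥ = Ideal.torsionOf R R v := by
      ext r
      simp [Ideal.mem_comap, hq, Ideal.Quotient.eq_zero_iff_mem, Ideal.mem_torsionOf_iff,
        smul_eq_mul]
    rw [this]
    exact (sup_eq_left.mpr hkerQ).symm
  have hcQ : c ∈ Q := by
    rw [hQeq]
    simp only [Ideal.mem_comap]
    rw [hc, hg]
    exact Ideal.subset_span rfl
  refine ⟨c, le_antisymm ?_ ?_⟩
  · intro x hx
    obtain ⟨r, hr⟩ := mem_span_singleton.mp (hW hx)
    have hrQ : r ∈ Q := by
      simp only [hQdef, Submodule.mem_comap]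
      rw [show (mulBy v) r = r • v from rfl, hr]
      exact hx
    have hmem : q r ∈ Ideal.map q Q := Ideal.mem_map_of_mem q hrQ
    rw [hg, mem_span_singleton] at hmem
    obtain ⟨t, ht⟩ := hmem
    obtain ⟨s, hs⟩ := Ideal.Quotient.mk_surjective t
    have : q (r - c * s) = 0 := by
      rw [map_sub, map_mul, hc, hs]
      rw [smul_eq_mul] at ht
      rw [show (Ideal.Quotient.mk (Ideal.torsionOf R R v)) r = q r from rfl, ← ht]
      ring
    rw [hq, Ideal.Quotient.eq_zero_iff_mem, Ideal.mem_torsionOf_iff, smul_eq_mul,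
      sub_mul] at this
    have hx' : x = s • (c * v) := by
      rw [smul_eq_mul, ← hr, smul_eq_mul]
      have h2 : r * v = c * s * v := by
        have := sub_eq_zero.mp this
        linear_combination this
      rw [h2]; ring
    rw [hx']
    exact smul_mem _ _ (mem_span_singleton_self _)
  · rw [span_le, Set.singleton_subset_iff, SetLike.mem_coe]
    have := hcQ
    simp only [hQdef, Submodule.mem_comap] at this
    rwa [show (mulBy v) c = c • v from rfl, smul_eq_mul] at this

/-- Submodules of `span {v}` are totally ordered when `R ⧸ Ann v` is a PIR. -/
lemma chain_of_pir (v : R) (hPIR : IsPrincipalIdealRing (R ⧸ Ideal.torsionOf R R v))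
    (W₁ W₂ : Submodule R R) (h₁ : W₁ ≤ span R {v}) (h₂ : W₂ ≤ span R {v}) :
    W₁ ≤ W₂ ∨ W₂ ≤ W₁ := by
  obtain ⟨c₁, hc₁⟩ := cyc_of_pir v hPIR W₁ h₁
  obtain ⟨c₂, hc₂⟩ := cyc_of_pir v hPIR W₂ h₂
  set z₁ := c₁ * v
  set z₂ := c₂ * v
  have hz₁ : z₁ ∈ span R ({v} : Set R) := mem_span_singleton.mpr ⟨c₁, rfl⟩
  have hz₂ : z₂ ∈ span R ({v} : Set R) := mem_span_singleton.mpr ⟨c₂, rfl⟩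
  have hW₃ : span R ({z₁, z₂} : Set R) ≤ span R {v} := by
    rw [span_le]; intro y hy
    rcases hy with rfl | hy
    · exact hz₁
    · rcases hy with rfl; exact hz₂
  obtain ⟨c₃, hc₃⟩ := cyc_of_pir v hPIR _ hW₃
  set z₃ := c₃ * v
  have hz₁m : z₁ ∈ span R ({z₃} : Set R) := by
    rw [← hc₃]; exact subset_span (by simp)
  have hz₂m : z₂ ∈ span R ({z₃} : Set R) := by
    rw [← hc₃]; exact subset_span (by simp)
  obtain ⟨α, hα⟩ := mem_span_singleton.mp hz₁m
  obtain ⟨β, hβ⟩ := mem_span_singleton.mp hz₂m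
  have hz₃m : z₃ ∈ span R ({z₁, z₂} : Set R) := by
    rw [hc₃]; exact mem_span_singleton_self _
  obtain ⟨γ, δ, hγδ⟩ := mem_span_pair.mp hz₃m
  by_cases hz₃ : z₃ = 0
  · left
    have : W₁ = ⊥ := by
      rw [hc₁, show z₁ = (0:R) from by rw [← hα, hz₃, smul_zero], span_zero_singleton]
    rw [this]; exact bot_le
  · have key : (1 - (γ * α + δ * β)) * z₃ = 0 := by
      have h0 : γ • z₁ + δ • z₂ = z₃ := hγδ
      rw [← hα, ← hβ] at h0
      simp only [smul_eq_mul] at h0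
      show (1 - (γ * α + δ * β)) * (c₃ * v) = 0
      linear_combination -h0
    have hunit : IsUnit (γ * α + δ * β) :=
      isUnit_of_one_sub_nonunit (nonunit_of_mul_eq_zero hz₃ key)
    have : IsUnit (γ * α) ∨ IsUnit (δ * β) := by
      by_contra h
      push_neg at h
      rw [nonunit_iff_mem_max, nonunit_iff_mem_max] at h
      have := Submodule.add_mem _ h.1 h.2
      rw [← nonunit_iff_mem_max] at this
      exact this hunit
    rcases this with h | h
    · right
      have hαu : IsUnit α := isUnit_of_mul_isUnit_right h
      have : W₁ = span R ({z₃} : Set R) := by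
        rw [hc₁, show z₁ = α * z₃ from by rw [← hα, smul_eq_mul],
          span_singleton_unit_mul hαu]
      rw [this, ← hc₃, hc₂]
      exact span_le.mpr (by
        intro y hy; rcases hy with rfl
        exact SetLike.mem_coe.mpr (subset_span (by simp)))
    · left
      have hβu : IsUnit β := isUnit_of_mul_isUnit_right h
      have : W₂ = span R ({z₃} : Set R) := by
        rw [hc₂, show z₂ = β * z₃ from by rw [← hβ, smul_eq_mul],
          span_singleton_unit_mul hβu]
      rw [this, ← hc₃, hc₁]
      exact span_le.mpr (by
        intro y hy; rcases hy with rfl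
        exact SetLike.mem_coe.mpr (subset_span (by simp)))

end PIRLemmas

section Semisimple

variable {R : Type} [CommRing R] [IsLocalRing R]

/-- A finite set contained in the union of a nonempty chain of sets is contained in one
member. -/
lemma finset_subset_chain_member {c : Set (Set R)} (hc : IsChain (· ⊆ ·) c)
    (hne : c.Nonempty) (T : Finset R) (hT : ↑T ⊆ ⋃₀ c) : ∃ Z ∈ c, ↑T ⊆ Z := by
  classical
  induction T using Finset.induction_on with
  | empty => exact ⟨hne.choose, hne.choose_spec, by simp⟩
  | @insert a T ha ih =>
    have hT' : ↑T ⊆ ⋃₀ c := by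
      intro x hx
      exact hT (by simp [hx])
    obtain ⟨Z, hZ, hTZ⟩ := ih hT'
    have haU : a ∈ ⋃₀ c := hT (by simp)
    obtain ⟨Z', hZ', haZ'⟩ := haU
    rcases hc.total hZ hZ' with h | h
    · refine ⟨Z', hZ', ?_⟩
      intro x hx
      simp only [Finset.coe_insert, Set.mem_insert_iff] at hx
      rcases hx with rfl | hx
      · exact haZ'
      · exact h (hTZ hx)
    · refine ⟨Z, hZ, ?_⟩
      intro x hx
      simp only [Finset.coe_insert, Set.mem_insert_iff] at hx
      rcases hx with rfl | hx
      · exact h haZ'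
      · exact hTZ hx

/-- Any ideal killed by the maximal ideal decomposes as a direct sum of cyclic
submodules. -/
lemma exists_cyclic_decomp_of_torsion (K : Submodule R R)
    (hK : ∀ x ∈ K, ∀ m ∈ maximalIdeal R, m * x = 0) :
    ∃ (κ : Type) (z : κ → R), (∀ j, z j ∈ K) ∧
      iSupIndep (fun j => span R ({z j} : Set R)) ∧
      (⨆ j, span R ({z j} : Set R)) = K := by
  classical
  set S : Set (Set R) := {Z | Z ⊆ (K : Set R) \ {0} ∧ ∀ z ∈ Z, z ∉ span R (Z \ {z})} with hS
  have hzorn : ∃ m, Maximal (fun x => x ∈ S) m := by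
    apply zorn_subset
    intro c hcS hchain
    rcases Set.eq_empty_or_nonempty c with rfl | hne
    · refine ⟨∅, ⟨by simp, by intro z hz; simp at hz⟩, by simp⟩
    · refine ⟨⋃₀ c, ⟨?_, ?_⟩, fun s hs => Set.subset_sUnion_of_mem hs⟩
      · intro x hx
        obtain ⟨Z, hZ, hxZ⟩ := hx
        exact (hcS hZ).1 hxZ
      · intro z hz hspan
        obtain ⟨Z₀, hZ₀, hzZ₀⟩ := hz
        obtain ⟨T, hTsub, hzT⟩ := Submodule.mem_span_finite_of_mem_span hspan
        have hTU : ↑T ⊆ ⋃₀ c := fun x hx => (hTsub hx).1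
        obtain ⟨Z₁, hZ₁, hTZ₁⟩ := finset_subset_chain_member hchain ⟨Z₀, hZ₀⟩ T hTU
        rcases hchain.total hZ₀ hZ₁ with h | h
        · apply (hcS hZ₁).2 z (h hzZ₀)
          apply span_mono (show ↑T ⊆ Z₁ \ {z} from ?_) hzT
          intro x hx
          exact ⟨hTZ₁ hx, (hTsub hx).2⟩
        · apply (hcS hZ₀).2 z hzZ₀
          apply span_mono (show ↑T ⊆ Z₀ \ {z} from ?_) hzT
          intro x hx
          exact ⟨h (hTZ₁ hx), (hTsub hx).2⟩
  obtain ⟨Z, hZS, hZmax⟩ := hzorn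
  have hZK : span R Z = K := by
    apply le_antisymm
    · rw [span_le]
      intro x hx
      exact ((hZS.1) hx).1
    · intro x hxK
      by_contra hxs
      have hxZ : x ∉ Z := fun h => hxs (subset_span h)
      have hx0 : x ≠ 0 := fun h => hxs (h ▸ (span R Z).zero_mem)
      have hins : insert x Z ∈ S := by
        constructor
        · intro y hy
          rw [Set.mem_insert_iff] at hy
          rcases hy with rfl | hy
          · exact ⟨hxK, hx0⟩
          · exact hZS.1 hy
        · intro z hz hspan
          rw [Set.mem_insert_iff] at hz
          rcases hz with rfl | hz
          · apply hxs
            apply span_mono (show insert z Z \ {z} ⊆ Z from ?_) hspan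
            intro y hy
            rcases hy.1 with rfl | h
            · exact absurd rfl hy.2
            · exact h
          · have hsub : insert x Z \ {z} ⊆ insert x (Z \ {z}) := by
              intro y hy
              rcases hy.1 with rfl | h
              · exact Set.mem_insert _ _
              · exact Set.mem_insert_of_mem _ ⟨h, hy.2⟩
            have hspan' : z ∈ span R (insert x (Z \ {z})) := span_mono hsub hspan
            rw [Set.insert_eq, span_union] at hspan'
            obtain ⟨y₁, hy₁, y₂, hy₂, hzsum⟩ := Submodule.mem_sup.mp hspan'
            obtain ⟨r, hr⟩ := mem_span_singleton.mp hy₁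
            by_cases hru : IsUnit r
            · apply hxs
              obtain ⟨u, rfl⟩ := hru
              have hx' : x = (↑u⁻¹ : R) • (z - y₂) := by
                rw [← hzsum, ← hr]
                rw [add_sub_cancel_right, smul_smul, Units.inv_mul, one_smul]
              rw [hx']
              exact smul_mem _ _ (Submodule.sub_mem _ (subset_span hz)
                ((span_mono Set.diff_subset) hy₂))
            · rw [nonunit_iff_mem_max] at hru
              have hr0 : r • x = 0 := by
                rw [smul_eq_mul]
                exact hK x hxK r hru
              rw [hr0] at hr
              have hzy : z = y₂ := by rw [← hzsum, ← hr, zero_add]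
              apply hZS.2 z hz
              rw [hzy] at hy₂ ⊢
              exact hy₂
      have hsub := hZmax hins (Set.subset_insert x Z)
      exact hxZ (hsub (Set.mem_insert x Z))
  refine ⟨Z, fun j => (j : R), ?_, ?_, ?_⟩
  · intro j
    rw [← hZK]
    exact subset_span j.2
  · intro j
    rw [Submodule.disjoint_def]
    intro y hy hy'
    have hy'' : y ∈ span R (Z \ {(j : R)}) := by
      refine (iSup_le fun i => iSup_le fun hij => ?_ : (⨆ i, ⨆ (_ : i ≠ j), span R ({(i : R)} : Set R)) ≤ span R (Z \ {(j : R)})) hy'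
      rw [span_le, Set.singleton_subset_iff]
      refine subset_span ⟨i.2, ?_⟩
      simp only [Set.mem_singleton_iff]
      exact fun h => hij (Subtype.ext h)
    obtain ⟨r, hr⟩ := mem_span_singleton.mp hy
    by_cases hru : IsUnit r
    · exfalso
      apply hZS.2 (j : R) j.2
      obtain ⟨u, rfl⟩ := hru
      have heq : (j : R) = (↑u⁻¹ : R) • y := by
        rw [← hr, smul_smul, Units.inv_mul, one_smul]
      have h2 : (↑u⁻¹ : R) • y ∈ span R (Z \ {(j : R)}) := smul_mem _ _ hy''
      rwa [← heq] at h2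
    · rw [nonunit_iff_mem_max] at hru
      rw [← hr, smul_eq_mul]
      exact hK _ (by rw [← hZK]; exact subset_span j.2) r hru
  · rw [show (⨆ (j : ↥Z), span R ({(j : R)} : Set R)) = span R (Set.range (fun j : ↥Z => (j : R))) from (span_range_eq_iSup).symm]
    rw [Subtype.range_val]
    exact hZK

end Semisimple


section Assemble

variable {R : Type} [CommRing R] [IsLocalRing R]

lemma assemble_three {I : Ideal R} {S : Submodule R R} (a b : R) {κ : Type} (zb : κ → R)
    (haI : a ∈ I) (hbI : b ∈ I) (hzbI : ∀ j, zb j ∈ I)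
    (hzbS : ∀ j, zb j ∈ S)
    (ha : ∀ r : R, r * a ∈ span R ({b} : Set R) ⊔ S → r * a = 0)
    (hb : ∀ r : R, r * b ∈ S → r * b = 0)
    (hKind : iSupIndep (fun j => span R ({zb j} : Set R)))
    (hsum : I ≤ span R ({a} : Set R) ⊔ (span R ({b} : Set R) ⊔ ⨆ j, span R ({zb j} : Set R))) :
    I.IsDirectSumOfCyclics := by
  classical
  refine ⟨Option (Option κ), fun o => Option.elim o a (fun o' => Option.elim o' b zb), ?_, ?_⟩
  · intro o
    rw [Submodule.disjoint_def]
    intro y hy hy'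
    match o with
    | none =>
      simp only [Option.elim] at hy
      have hbound : (⨆ o', ⨆ (_ : o' ≠ (none : Option (Option κ))),
          span R ({Option.elim o' a (fun o'' => Option.elim o'' b zb)} : Set R))
          ≤ span R ({b} : Set R) ⊔ S := by
        refine iSup_le fun o' => iSup_le fun ho' => ?_
        match o' with
        | none => exact absurd rfl ho'
        | some none =>
          simp only [Option.elim]
          exact le_sup_left
        | some (some j) =>
          simp only [Option.elim]
          refine le_trans ?_ le_sup_right
          rw [span_le, Set.singleton_subset_iff]
          exact hzbS j
      obtain ⟨r, hr⟩ := mem_span_singleton.mp hy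
      rw [← hr, smul_eq_mul]
      exact ha r (by rw [← smul_eq_mul, hr]; exact hbound hy')
    | some none =>
      simp only [Option.elim] at hy
      have hbound : (⨆ o', ⨆ (_ : o' ≠ (some none : Option (Option κ))),
          span R ({Option.elim o' a (fun o'' => Option.elim o'' b zb)} : Set R))
          ≤ span R ({a} : Set R) ⊔ S := by
        refine iSup_le fun o' => iSup_le fun ho' => ?_
        match o' with
        | none =>
          simp only [Option.elim]
          exact le_sup_left
        | some none => exact absurd rfl ho'
        | some (some j) =>
          simp only [Option.elim]
          refine le_trans ?_ le_sup_right
          rw [span_le, Set.singleton_subset_iff]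
          exact hzbS j
      have hy2 := hbound hy'
      obtain ⟨p, hp, k, hk, hpk⟩ := Submodule.mem_sup.mp hy2
      obtain ⟨s, hs⟩ := mem_span_singleton.mp hp
      have hpa : s * a = 0 := by
        apply ha
        rw [← smul_eq_mul, hs]
        have : p = y - k := by rw [← hpk]; ring
        rw [this]
        exact Submodule.sub_mem _ (le_sup_left (α := Submodule R R) hy)
          (le_sup_right (α := Submodule R R) hk)
      have hyk : y = k := by
        rw [← hpk, ← hs, smul_eq_mul, hpa, zero_add]
      obtain ⟨r, hr⟩ := mem_span_singleton.mp hy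
      rw [← hr, smul_eq_mul]
      exact hb r (by rw [← smul_eq_mul, hr, hyk]; exact hk)
    | some (some j) =>
      simp only [Option.elim] at hy
      have hbound : (⨆ o', ⨆ (_ : o' ≠ (some (some j) : Option (Option κ))),
          span R ({Option.elim o' a (fun o'' => Option.elim o'' b zb)} : Set R))
          ≤ span R ({a} : Set R) ⊔ (span R ({b} : Set R) ⊔
            ⨆ i, ⨆ (_ : i ≠ j), span R ({zb i} : Set R)) := by
        refine iSup_le fun o' => iSup_le fun ho' => ?_
        match o' with
        | none =>
          simp only [Option.elim]
          exact le_sup_left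
        | some none =>
          simp only [Option.elim]
          exact le_trans le_sup_left le_sup_right
        | some (some i) =>
          simp only [Option.elim]
          have hij : i ≠ j := fun h => ho' (by rw [h])
          refine le_trans (le_trans ?_ le_sup_right) le_sup_right
          exact le_iSup₂ (f := fun (i' : κ) (_ : i' ≠ j) => span R ({zb i'} : Set R)) i hij
      have hy2 := hbound hy'
      obtain ⟨p, hp, w, hw, hpw⟩ := Submodule.mem_sup.mp hy2
      obtain ⟨q, hq, k, hk, hqk⟩ := Submodule.mem_sup.mp hw
      have hkS : k ∈ S := by
        have : (⨆ i, ⨆ (_ : i ≠ j), span R ({zb i} : Set R)) ≤ S := by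
          refine iSup_le fun i => iSup_le fun _ => ?_
          rw [span_le, Set.singleton_subset_iff]
          exact hzbS i
        exact this hk
      have hyS : y ∈ S := by
        have : span R ({zb j} : Set R) ≤ S := by
          rw [span_le, Set.singleton_subset_iff]; exact hzbS j
        exact this hy
      obtain ⟨s, hs⟩ := mem_span_singleton.mp hp
      have hpa : s * a = 0 := by
        apply ha
        rw [← smul_eq_mul, hs]
        have : p = (y - k) - q := by rw [← hpw, ← hqk]; ring
        rw [this]
        exact Submodule.sub_mem _
          (le_sup_right (α := Submodule R R) (Submodule.sub_mem _ hyS hkS)) ((le_sup_left (α := Submodule R R)) hq)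
      have hp0 : p = 0 := by rw [← hs, smul_eq_mul, hpa]
      obtain ⟨t, ht⟩ := mem_span_singleton.mp hq
      have hqb : t * b = 0 := by
        apply hb
        rw [← smul_eq_mul, ht]
        have : q = y - k := by rw [← hpw, ← hqk, hp0]; ring
        rw [this]
        exact Submodule.sub_mem _ hyS hkS
      have hq0 : q = 0 := by rw [← ht, smul_eq_mul, hqb]
      have hyk : y = k := by rw [← hpw, ← hqk, hp0, hq0]; ring
      have := (hKind j).le_bot (x := y) ⟨hy, by rw [hyk]; exact hk⟩
      simpa using this
  · rw [iSup_option (fun o => span R ({Option.elim o a (fun o' => Option.elim o' b zb)} : Set R))]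
    rw [iSup_option (fun o' => span R ({Option.elim (some o') a (fun o'' => Option.elim o'' b zb)} : Set R))]
    simp only [Option.elim]
    apply le_antisymm
    · refine sup_le ?_ (sup_le ?_ ?_)
      · rw [span_le, Set.singleton_subset_iff]; exact haI
      · rw [span_le, Set.singleton_subset_iff]; exact hbI
      · refine iSup_le fun j => ?_
        rw [span_le, Set.singleton_subset_iff]; exact hzbI j
    · exact hsum

end Assemble

section Backward

variable {R : Type} [CommRing R] [IsLocalRing R]

lemma backward_ideals (n : ℕ) (v : Fin n → R)
    (hind : iSupIndep (fun i => span R ({v i} : Set R)))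
    (hsup : (⨆ i, span R ({v i} : Set R)) = maximalIdeal R)
    (hPIR : ∀ i, IsPrincipalIdealRing (R ⧸ Ideal.torsionOf R R (v i)))
    (i₁ i₂ : Fin n)
    (hts : ∀ i, ¬ IsSimpleModule R (span R ({v i} : Set R)) → i = i₁ ∨ i = i₂) :
    ∀ I : Ideal R, I.IsDirectSumOfCyclics := by
  classical
  -- cross products vanish
  have hcross : ∀ i j : Fin n, i ≠ j → v i * v j = 0 := by
    intro i j hij
    have h1 : v i * v j ∈ span R ({v j} : Set R) := by
      rw [mem_span_singleton]; exact ⟨v i, rfl⟩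
    have h2 : v i * v j ∈ span R ({v i} : Set R) := by
      rw [mem_span_singleton]; exact ⟨v j, mul_comm (v j) (v i)⟩
    have h3 : span R ({v j} : Set R) ≤ ⨆ l, ⨆ (_ : l ≠ i), span R ({v l} : Set R) :=
      le_iSup₂ (f := fun (l : Fin n) (_ : l ≠ i) => span R ({v l} : Set R)) j
        (fun h => hij h.symm)
    exact (hind i).le_bot ⟨h2, h3 h1⟩
  -- elements of the maximal ideal multiply `v i` into `span {v i * v i}`
  have hmul : ∀ (i : Fin n) (m : R), m ∈ maximalIdeal R →
      ∃ c : R, m * v i = c * (v i * v i) := by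
    intro i m hm
    rw [← hsup, ← span_range_eq_iSup] at hm
    obtain ⟨c, hc⟩ := (mem_span_range_iff_exists_fun R).mp hm
    refine ⟨c i, ?_⟩
    rw [← hc, Finset.sum_mul]
    rw [Finset.sum_eq_single i]
    · rw [smul_eq_mul]; ring
    · intro j _ hji
      rw [smul_eq_mul, mul_assoc, hcross j i hji, mul_zero]
    · intro h; exact absurd (Finset.mem_univ i) h
  -- simple summands are killed by the maximal ideal
  have hkill : ∀ i : Fin n, IsSimpleModule R (span R ({v i} : Set R)) →
      ∀ m ∈ maximalIdeal R, m * v i = 0 := by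
    intro i hsimple m hm
    have hatom := isSimpleModule_iff_isAtom.mp hsimple
    have hvi0 : v i ≠ 0 := by
      intro h
      apply hatom.1
      rw [h, span_zero_singleton]
    have hsq : v i * v i = 0 := by
      by_contra hsq
      have hle : span R ({v i * v i} : Set R) ≤ span R ({v i} : Set R) := by
        rw [span_le, Set.singleton_subset_iff, SetLike.mem_coe, mem_span_singleton]
        exact ⟨v i, rfl⟩
      have hne : span R ({v i * v i} : Set R) ≠ span R ({v i} : Set R) := by
        intro heq
        have : v i ∈ span R ({v i * v i} : Set R) := by
          rw [heq]; exact mem_span_singleton_self _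
        obtain ⟨d, hd⟩ := mem_span_singleton.mp this
        have hvm : v i ∈ maximalIdeal R := by
          rw [← hsup]
          exact (le_iSup (fun l => span R ({v l} : Set R)) i) (mem_span_singleton_self _)
        have : (1 - d * v i) * v i = 0 := by
          rw [smul_eq_mul] at hd
          linear_combination -hd
        have hunit : IsUnit (1 - d * v i) := by
          by_contra hnu
          have := isUnit_of_one_sub_nonunit hnu
          have hdm : d * v i ∈ maximalIdeal R := Ideal.mul_mem_left _ d hvm
          rw [← nonunit_iff_mem_max] at hdm
          exact hdm this
        obtain ⟨u, hu⟩ := hunit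
        apply hvi0
        calc v i = (↑u⁻¹ * ↑u) * v i := by simp
        _ = ↑u⁻¹ * ((1 - d * v i) * v i) := by rw [hu]; ring
        _ = 0 := by rw [this, mul_zero]
      have hbot : span R ({v i * v i} : Set R) = ⊥ :=
        hatom.2 _ (lt_of_le_of_ne hle hne)
      apply hsq
      have hmem : v i * v i ∈ span R ({v i * v i} : Set R) := mem_span_singleton_self _
      rw [hbot] at hmem
      simpa using hmem
    obtain ⟨c, hc⟩ := hmul i m hm
    rw [hc, hsq, mul_zero]
  intro I
  by_cases hItop : I = ⊤
  · refine ⟨PUnit, fun _ => 1, ?_, ?_⟩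
    · intro o
      have : (⨆ o', ⨆ (_ : o' ≠ o), span R ({(1:R)} : Set R)) = ⊥ := by
        rw [eq_bot_iff]
        refine iSup_le fun o' => iSup_le fun h => ?_
        exact absurd (Subsingleton.elim o' o) h
      rw [this]
      exact disjoint_bot_right
    · rw [iSup_const, hItop]
      exact Ideal.span_singleton_one
  have hIM : I ≤ maximalIdeal R := IsLocalRing.le_maximalIdeal hItop
  -- set up the three pieces
  set U : Submodule R R := span R ({v i₁} : Set R) with hUdef
  set V : Submodule R R := if i₂ = i₁ then ⊥ else span R ({v i₂} : Set R) with hVdef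
  set S : Submodule R R := ⨆ (i : {i : Fin n // i ≠ i₁ ∧ i ≠ i₂}), span R ({v i.1} : Set R)
    with hSdef
  have hVle : V ≤ span R ({v i₂} : Set R) := by
    rw [hVdef]; split
    · exact bot_le
    · exact le_rfl
  have hMsplit : maximalIdeal R = U ⊔ (V ⊔ S) := by
    apply le_antisymm
    · rw [← hsup]
      refine iSup_le fun i => ?_
      by_cases hi1 : i = i₁
      · rw [hi1]; exact le_sup_left
      by_cases hi2 : i = i₂
      · rcases eq_or_ne i₂ i₁ with h21 | h21
        · exact absurd (hi2.trans h21) hi1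
        · rw [hi2]
          refine le_trans ?_ (le_trans le_sup_left le_sup_right)
          rw [hVdef, if_neg h21]
      · refine le_trans ?_ (le_trans le_sup_right le_sup_right)
        exact le_iSup (fun (i : {i : Fin n // i ≠ i₁ ∧ i ≠ i₂}) =>
          span R ({v i.1} : Set R)) ⟨i, hi1, hi2⟩
    · refine sup_le ?_ (sup_le ?_ ?_)
      · rw [← hsup]; exact le_iSup (fun l => span R ({v l} : Set R)) i₁
      · refine le_trans hVle ?_
        rw [← hsup]; exact le_iSup (fun l => span R ({v l} : Set R)) i₂
      · refine iSup_le fun i => ?_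
        rw [← hsup]; exact le_iSup (fun l => span R ({v l} : Set R)) i.1
  have hUM : U ≤ maximalIdeal R := by rw [hMsplit]; exact le_sup_left
  have hVM : V ≤ maximalIdeal R := by
    rw [hMsplit]; exact le_trans le_sup_left le_sup_right
  have hSM : S ≤ maximalIdeal R := by
    rw [hMsplit]; exact le_trans le_sup_right le_sup_right
  have dU : Disjoint U (V ⊔ S) := by
    refine Disjoint.mono_right ?_ (hind i₁)
    refine sup_le ?_ ?_
    · rcases eq_or_ne i₂ i₁ with h21 | h21
      · rw [hVdef, if_pos h21]; exact bot_le
      · rw [hVdef, if_neg h21]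
        exact le_iSup₂ (f := fun (l : Fin n) (_ : l ≠ i₁) => span R ({v l} : Set R)) i₂ h21
    · refine iSup_le fun i => ?_
      exact le_iSup₂ (f := fun (l : Fin n) (_ : l ≠ i₁) => span R ({v l} : Set R)) i.1 i.2.1
  have dV : Disjoint V S := by
    rcases eq_or_ne i₂ i₁ with h21 | h21
    · rw [hVdef, if_pos h21]; exact disjoint_bot_left
    · rw [hVdef, if_neg h21]
      refine Disjoint.mono_right ?_ (hind i₂)
      refine iSup_le fun i => ?_
      exact le_iSup₂ (f := fun (l : Fin n) (_ : l ≠ i₂) => span R ({v l} : Set R)) i.1 i.2.2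
  have hSkill : ∀ m ∈ maximalIdeal R, ∀ s ∈ S, m * s = 0 := by
    intro m hm
    have hker : S ≤ LinearMap.ker (mulBy m) := by
      rw [hSdef]
      refine iSup_le fun i => ?_
      rw [span_le, Set.singleton_subset_iff, SetLike.mem_coe, LinearMap.mem_ker]
      have hsimple : IsSimpleModule R (span R ({v i.1} : Set R)) := by
        by_contra h
        rcases hts i.1 h with h1 | h1
        · exact i.2.1 h1
        · exact i.2.2 h1
      have h0 := hkill i.1 hsimple m hm
      rw [mulBy_apply, mul_comm]
      exact h0
    intro s hs
    have := hker hs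
    rw [LinearMap.mem_ker, mulBy_apply] at this
    rw [mul_comm]
    exact this
  have hVcyc : ∀ W : Submodule R R, W ≤ V → ∃ z : R, W = span R ({z} : Set R) := by
    intro W hW
    rcases eq_or_ne i₂ i₁ with h21 | h21
    · rw [hVdef, if_pos h21, le_bot_iff] at hW
      exact ⟨0, by rw [hW, span_zero_singleton]⟩
    · obtain ⟨c, hc⟩ := cyc_of_pir (v i₂) (hPIR i₂) W (le_trans hW hVle)
      exact ⟨c * v i₂, hc⟩
  have hVchain : ∀ W₁ W₂ : Submodule R R, W₁ ≤ V → W₂ ≤ V → W₁ ≤ W₂ ∨ W₂ ≤ W₁ := by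
    intro W₁ W₂ h₁ h₂
    rcases eq_or_ne i₂ i₁ with h21 | h21
    · rw [hVdef, if_pos h21, le_bot_iff] at h₁
      left; rw [h₁]; exact bot_le
    · exact chain_of_pir (v i₂) (hPIR i₂) W₁ W₂ (le_trans h₁ hVle) (le_trans h₂ hVle)
  -- the U-component of I
  set A : Submodule R R := (I ⊔ (V ⊔ S)) ⊓ U with hAdef
  obtain ⟨cα, hAeq⟩ := cyc_of_pir (v i₁) (hPIR i₁) A (by rw [hAdef, hUdef]; exact inf_le_right)
  set α : R := cα * v i₁ with hαdef
  have hαU : α ∈ U := by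
    rw [hUdef, mem_span_singleton]; exact ⟨cα, rfl⟩
  have hαA : α ∈ A := by rw [hAeq]; exact mem_span_singleton_self _
  obtain ⟨x, hxI, w, hwVS, hxw⟩ := Submodule.mem_sup.mp (Submodule.mem_inf.mp hαA).1
  obtain ⟨βm, hβm, σm, hσm, hβσ⟩ := Submodule.mem_sup.mp hwVS
  set β : R := -βm with hβdef
  set σ : R := -σm with hσdef
  have hβV : β ∈ V := V.neg_mem hβm
  have hσS : σ ∈ S := S.neg_mem hσm
  have hxdec : x = α + β + σ := by
    rw [hβdef, hσdef]; linear_combination hxw + hβσ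
  have hproj : ∀ z ∈ I, ∃ r : R, z - r * x ∈ I ⊓ (V ⊔ S) := by
    intro z hz
    have hzM : z ∈ U ⊔ (V ⊔ S) := by rw [← hMsplit]; exact hIM hz
    obtain ⟨u, huU, w', hw'VS, huw⟩ := Submodule.mem_sup.mp hzM
    have hu' : u = z - w' := by linear_combination huw
    have huA : u ∈ A := by
      rw [hAdef]
      refine Submodule.mem_inf.mpr ⟨?_, huU⟩
      rw [hu']
      exact Submodule.sub_mem _ ((le_sup_left : I ≤ I ⊔ (V ⊔ S)) hz)
        ((le_sup_right : (V ⊔ S) ≤ I ⊔ (V ⊔ S)) hw'VS)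
    rw [hAeq] at huA
    obtain ⟨r, hr⟩ := mem_span_singleton.mp huA
    rw [smul_eq_mul] at hr
    refine ⟨r, Submodule.mem_inf.mpr ⟨?_, ?_⟩⟩
    · exact Submodule.sub_mem _ hz (Ideal.mul_mem_left I r hxI)
    · have key : z - r * x = (w' - r * β) - r * σ := by
        linear_combination - huw - r * hxdec - hr
      rw [key]
      refine Submodule.sub_mem _ (Submodule.sub_mem _ hw'VS
        ((le_sup_left : V ≤ V ⊔ S) (mul_mem_of_mem r hβV))) ?_
      exact (le_sup_right : S ≤ V ⊔ S) (mul_mem_of_mem r hσS)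
  set I' : Submodule R R := I ⊓ (V ⊔ S) with hI'def
  have hI'I : I' ≤ I := inf_le_left
  set B : Submodule R R := (I' ⊔ S) ⊓ V with hBdef
  obtain ⟨β', hBeq⟩ := hVcyc B inf_le_right
  have hβ'B : β' ∈ B := by rw [hBeq]; exact mem_span_singleton_self _
  have hβ'V : β' ∈ V := (Submodule.mem_inf.mp hβ'B).2
  obtain ⟨y, hyI', s₀, hs₀, hys⟩ := Submodule.mem_sup.mp (Submodule.mem_inf.mp hβ'B).1
  set σ' : R := -s₀ with hσ'def
  have hσ'S : σ' ∈ S := S.neg_mem hs₀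
  have hydec : y = β' + σ' := by rw [hσ'def]; linear_combination hys
  have hyI : y ∈ I := hI'I hyI'
  have hproj' : ∀ z ∈ I', ∃ r : R, z - r * y ∈ I ⊓ S := by
    intro z hz
    obtain ⟨b, hbV, s, hsS, hbs⟩ := Submodule.mem_sup.mp (Submodule.mem_inf.mp hz).2
    have hb' : b = z - s := by linear_combination hbs
    have hbB : b ∈ B := by
      rw [hBdef]
      refine Submodule.mem_inf.mpr ⟨?_, hbV⟩
      rw [hb']
      exact Submodule.sub_mem _ ((le_sup_left : I' ≤ I' ⊔ S) hz)
        ((le_sup_right : S ≤ I' ⊔ S) hsS)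
    rw [hBeq] at hbB
    obtain ⟨r, hr⟩ := mem_span_singleton.mp hbB
    rw [smul_eq_mul] at hr
    refine ⟨r, Submodule.mem_inf.mpr ⟨?_, ?_⟩⟩
    · exact Submodule.sub_mem _ ((Submodule.mem_inf.mp hz).1) (Ideal.mul_mem_left I r hyI)
    · have key : z - r * y = s - r * σ' := by
        linear_combination - hbs - hr - r * hydec
      rw [key]
      exact Submodule.sub_mem _ hsS (mul_mem_of_mem r hσ'S)
  -- decompose K = I ⊓ S
  obtain ⟨κ, zb, hzbK, hKind, hKsup⟩ := exists_cyclic_decomp_of_torsion (I ⊓ S)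
    (fun x hx m hm => hSkill m hm x (Submodule.mem_inf.mp hx).2)
  have hzbI : ∀ j, zb j ∈ I := fun j => (Submodule.mem_inf.mp (hzbK j)).1
  have hzbS : ∀ j, zb j ∈ S := fun j => (Submodule.mem_inf.mp (hzbK j)).2
  have hKle : (⨆ j, span R ({zb j} : Set R)) ≤ I ⊓ S := le_of_eq hKsup
  -- a couple of generic facts
  have hb_y : β' ≠ 0 → ∀ r : R, r * y ∈ S → r * y = 0 := by
    intro hβ'ne r hrS
    have h1 : r * β' = r * y - r * σ' := by linear_combination (-r) * hydec
    have h2 : r * β' ∈ S := by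
      rw [h1]
      exact Submodule.sub_mem _ hrS (mul_mem_of_mem r hσ'S)
    have h3 : r * β' ∈ V := mul_mem_of_mem r hβ'V
    have h4 : r * β' = 0 := dV.le_bot ⟨h3, h2⟩
    have h5 : r ∈ maximalIdeal R := mem_max_of_mul_eq_zero hβ'ne h4
    have h6 : r * σ' = 0 := hSkill r h5 σ' hσ'S
    linear_combination r * hydec + h4 + h6
  by_cases hα0 : α = 0
  · -- here I = I' : everything lives in V ⊔ S
    have hII' : ∀ z ∈ I, z ∈ I' := by
      intro z hz
      obtain ⟨r, hzr⟩ := hproj z hz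
      have hxVS : x ∈ V ⊔ S := by
        rw [hxdec, hα0, zero_add]
        exact Submodule.add_mem _ ((le_sup_left : V ≤ V ⊔ S) hβV)
          ((le_sup_right : S ≤ V ⊔ S) hσS)
      have hxI' : x ∈ I' := Submodule.mem_inf.mpr ⟨hxI, hxVS⟩
      have : z = (z - r * x) + r * x := by ring
      rw [hI'def] at hzr ⊢
      rw [this]
      exact Submodule.add_mem _ hzr (mul_mem_of_mem r hxI')
    by_cases hβ'0 : β' = 0
    · -- I = K
      refine assemble_three (S := S) 0 0 zb I.zero_mem I.zero_mem hzbI hzbS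
        (fun r _ => by rw [mul_zero]) (fun r _ => by rw [mul_zero]) hKind ?_
      intro z hz
      obtain ⟨r, hzr⟩ := hproj' z (hII' z hz)
      have hyK : y ∈ I ⊓ S := by
        refine Submodule.mem_inf.mpr ⟨hyI, ?_⟩
        rw [hydec, hβ'0, zero_add]
        exact hσ'S
      have hzK : z ∈ I ⊓ S := by
        have : z = (z - r * y) + r * y := by ring
        rw [this]
        exact Submodule.add_mem _ hzr (mul_mem_of_mem r hyK)
      refine (le_sup_right : _ ≤ span R ({(0:R)} : Set R) ⊔ _) ?_
      refine (le_sup_right : _ ≤ span R ({(0:R)} : Set R) ⊔ _) ?_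
      rw [hKsup]
      exact hzK
    · -- I = span y ⊕ K
      refine assemble_three (S := S) 0 y zb I.zero_mem hyI hzbI hzbS
        (fun r _ => by rw [mul_zero]) (hb_y hβ'0) hKind ?_
      intro z hz
      obtain ⟨r, hzr⟩ := hproj' z (hII' z hz)
      have : z = r * y + (z - r * y) := by ring
      rw [this]
      refine (le_sup_right : _ ≤ span R ({(0:R)} : Set R) ⊔ _) ?_
      refine Submodule.add_mem _ ?_ ?_
      · exact (le_sup_left : _ ≤ span R ({y} : Set R) ⊔ _)
          (mem_span_singleton.mpr ⟨r, by rw [smul_eq_mul]⟩)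
      · refine (le_sup_right : _ ≤ span R ({y} : Set R) ⊔ _) ?_
        rw [hKsup]
        exact hzr
  · by_cases hβB : β ∈ B
    · -- case (i)
      rw [hBeq] at hβB
      obtain ⟨r₀, hr₀⟩ := mem_span_singleton.mp hβB
      rw [smul_eq_mul] at hr₀
      set x₁ : R := x - r₀ * y with hx₁def
      have hx₁I : x₁ ∈ I := Submodule.sub_mem _ hxI (Ideal.mul_mem_left I r₀ hyI)
      set σ₁ : R := σ - r₀ * σ' with hσ₁def
      have hσ₁S : σ₁ ∈ S := Submodule.sub_mem _ hσS (mul_mem_of_mem r₀ hσ'S)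
      have hx₁dec : x₁ = α + σ₁ := by
        rw [hx₁def, hσ₁def]
        linear_combination hxdec - r₀ * hydec - hr₀
      have ha : ∀ (bb : R), bb ∈ V ⊔ S → ∀ r : R,
          r * x₁ ∈ span R ({bb} : Set R) ⊔ S → r * x₁ = 0 := by
        intro bb hbb r hr
        have hbound : span R ({bb} : Set R) ⊔ S ≤ V ⊔ S := by
          refine sup_le ?_ le_sup_right
          rw [span_le, Set.singleton_subset_iff]
          exact hbb
        have hrVS : r * x₁ ∈ V ⊔ S := hbound hr
        have hrα : r * α = r * x₁ - r * σ₁ := by linear_combination (-r) * hx₁dec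
        have hrαVS : r * α ∈ V ⊔ S := by
          rw [hrα]
          exact Submodule.sub_mem _ hrVS ((le_sup_right : S ≤ V ⊔ S) (mul_mem_of_mem r hσ₁S))
        have hrαU : r * α ∈ U := mul_mem_of_mem r hαU
        have hrα0 : r * α = 0 := dU.le_bot ⟨hrαU, hrαVS⟩
        have hrmax : r ∈ maximalIdeal R := mem_max_of_mul_eq_zero hα0 hrα0
        have hrσ₁ : r * σ₁ = 0 := hSkill r hrmax σ₁ hσ₁S
        linear_combination r * hx₁dec + hrα0 + hrσ₁
      have hsum1 : ∀ z ∈ I, ∃ r r' : R, z - r * x₁ - r' * y ∈ I ⊓ S := by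
        intro z hz
        obtain ⟨r, hzr⟩ := hproj z hz
        obtain ⟨r', hzr'⟩ := hproj' _ hzr
        refine ⟨r, r * r₀ + r', ?_⟩
        have : z - r * x₁ - (r * r₀ + r') * y = (z - r * x) - r' * y := by
          rw [hx₁def]; ring
        rw [this]
        exact hzr'
      by_cases hβ'0 : β' = 0
      · -- b := 0 ; note y ∈ K then
        have hyK : y ∈ I ⊓ S := by
          refine Submodule.mem_inf.mpr ⟨hyI, ?_⟩
          rw [hydec, hβ'0, zero_add]
          exact hσ'S
        refine assemble_three (S := S) x₁ 0 zb hx₁I I.zero_mem hzbI hzbS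
          (ha 0 (Submodule.zero_mem _) ) (fun r _ => by rw [mul_zero]) hKind ?_
        intro z hz
        obtain ⟨r, r', hzrr⟩ := hsum1 z hz
        have : z = r * x₁ + (r' * y + (z - r * x₁ - r' * y)) := by ring
        rw [this]
        refine Submodule.add_mem _ ?_ ?_
        · exact (le_sup_left : _ ≤ span R ({x₁} : Set R) ⊔ _)
            (mem_span_singleton.mpr ⟨r, by rw [smul_eq_mul]⟩)
        · refine (le_sup_right : _ ≤ span R ({x₁} : Set R) ⊔ _) ?_
          refine (le_sup_right : _ ≤ span R ({(0:R)} : Set R) ⊔ _) ?_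
          rw [hKsup]
          exact Submodule.add_mem _ (mul_mem_of_mem r' hyK) hzrr
      · -- b := y
        have hyVS : y ∈ V ⊔ S := by
          rw [hydec]
          exact Submodule.add_mem _ ((le_sup_left : V ≤ V ⊔ S) hβ'V)
            ((le_sup_right : S ≤ V ⊔ S) hσ'S)
        refine assemble_three (S := S) x₁ y zb hx₁I hyI hzbI hzbS
          (ha y hyVS) (hb_y hβ'0) hKind ?_
        intro z hz
        obtain ⟨r, r', hzrr⟩ := hsum1 z hz
        have : z = r * x₁ + (r' * y + (z - r * x₁ - r' * y)) := by ring
        rw [this]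
        refine Submodule.add_mem _ ?_ ?_
        · exact (le_sup_left : _ ≤ span R ({x₁} : Set R) ⊔ _)
            (mem_span_singleton.mpr ⟨r, by rw [smul_eq_mul]⟩)
        · refine (le_sup_right : _ ≤ span R ({x₁} : Set R) ⊔ _) ?_
          refine Submodule.add_mem _ ?_ ?_
          · exact (le_sup_left : _ ≤ span R ({y} : Set R) ⊔ _)
              (mem_span_singleton.mpr ⟨r', by rw [smul_eq_mul]⟩)
          · refine (le_sup_right : _ ≤ span R ({y} : Set R) ⊔ _) ?_
            rw [hKsup]
            exact hzrr
    · -- case (ii) : a := x, b := 0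
      have hβne : β ≠ 0 := by
        intro h
        exact hβB (by rw [h]; exact B.zero_mem)
      have hβspan : span R ({β} : Set R) ≤ V := by
        rw [span_le, Set.singleton_subset_iff]; exact hβV
      have hBleβ : B ≤ span R ({β} : Set R) := by
        rcases hVchain B (span R ({β} : Set R)) inf_le_right hβspan with h | h
        · exact h
        · exact absurd (h (mem_span_singleton_self β)) hβB
      have keyB : ∀ b ∈ B, ∃ cv, cv ∈ V ∧ b = cv * x := by
        intro b hbB
        obtain ⟨c, hc⟩ := mem_span_singleton.mp (hBleβ hbB)
        rw [smul_eq_mul] at hc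
        have hcnu : ¬ IsUnit c := by
          intro hcu
          obtain ⟨u, rfl⟩ := hcu
          apply hβB
          have : β = (↑u⁻¹ : R) * b := by
            rw [← hc, ← mul_assoc]
            simp
          rw [this, ← smul_eq_mul]
          exact B.smul_mem _ hbB
        rw [nonunit_iff_mem_max] at hcnu
        rw [hMsplit] at hcnu
        obtain ⟨cu, hcu, w2, hw2, hcuw⟩ := Submodule.mem_sup.mp hcnu
        obtain ⟨cv, hcv, cs, hcs, hvw⟩ := Submodule.mem_sup.mp hw2
        have hcdec : c = cu + cv + cs := by linear_combination - hcuw - hvw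
        have hcuβ : cu * β = 0 := by
          refine dU.le_bot ⟨?_, (le_sup_left : V ≤ V ⊔ S) (mul_mem_of_mem cu hβV)⟩
          rw [mul_comm]
          exact mul_mem_of_mem β hcu
        have hcsβ : cs * β = 0 := by
          refine dV.le_bot ⟨mul_mem_of_mem cs hβV, ?_⟩
          rw [mul_comm]
          exact mul_mem_of_mem β hcs
        have hcvα : cv * α = 0 := by
          refine dU.le_bot ⟨mul_mem_of_mem cv hαU, (le_sup_left : V ≤ V ⊔ S) ?_⟩
          rw [mul_comm]
          exact mul_mem_of_mem α hcv
        have hcvσ : cv * σ = 0 := hSkill cv (hVM hcv) σ hσS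
        refine ⟨cv, hcv, ?_⟩
        calc b = c * β := hc.symm
        _ = (cu + cv + cs) * β := by rw [← hcdec]
        _ = cv * β := by
            rw [add_mul, add_mul, hcuβ, hcsβ]; ring
        _ = cv * x := by
            rw [hxdec]
            rw [mul_add, mul_add, hcvα, hcvσ]; ring
      have ha2 : ∀ r : R, r * x ∈ span R ({(0:R)} : Set R) ⊔ S → r * x = 0 := by
        intro r hr
        have hrS : r * x ∈ S := by
          rw [span_zero_singleton, bot_sup_eq] at hr
          exact hr
        have hrα : r * α = r * x - r * β - r * σ := by linear_combination (-r) * hxdec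
        have hrαVS : r * α ∈ V ⊔ S := by
          rw [hrα]
          refine Submodule.sub_mem _ (Submodule.sub_mem _
            ((le_sup_right : S ≤ V ⊔ S) hrS)
            ((le_sup_left : V ≤ V ⊔ S) (mul_mem_of_mem r hβV))) ?_
          exact (le_sup_right : S ≤ V ⊔ S) (mul_mem_of_mem r hσS)
        have hrα0 : r * α = 0 := dU.le_bot ⟨mul_mem_of_mem r hαU, hrαVS⟩
        have hrmax : r ∈ maximalIdeal R := mem_max_of_mul_eq_zero hα0 hrα0
        have hrσ : r * σ = 0 := hSkill r hrmax σ hσS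
        have hrxV : r * x ∈ V := by
          have : r * x = r * β := by linear_combination r * hxdec + hrα0 + hrσ
          rw [this]
          exact mul_mem_of_mem r hβV
        exact dV.le_bot ⟨hrxV, hrS⟩
      refine assemble_three (S := S) x 0 zb hxI I.zero_mem hzbI hzbS
        ha2 (fun r _ => by rw [mul_zero]) hKind ?_
      intro z hz
      obtain ⟨r, hzr⟩ := hproj z hz
      obtain ⟨b, hbV, s, hsS, hbs⟩ := Submodule.mem_sup.mp (Submodule.mem_inf.mp hzr).2
      have hb' : b = (z - r * x) - s := by linear_combination hbs
      have hbB : b ∈ B := by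
        rw [hBdef]
        refine Submodule.mem_inf.mpr ⟨?_, hbV⟩
        rw [hb']
        exact Submodule.sub_mem _ ((le_sup_left : I' ≤ I' ⊔ S) hzr)
          ((le_sup_right : S ≤ I' ⊔ S) hsS)
      obtain ⟨cv, hcvV, hbcv⟩ := keyB b hbB
      have hsK : s ∈ I ⊓ S := by
        refine Submodule.mem_inf.mpr ⟨?_, hsS⟩
        have : s = (z - r * x) - b := by linear_combination hbs
        rw [this, hbcv]
        exact Submodule.sub_mem _ ((Submodule.mem_inf.mp hzr).1)
          (Ideal.mul_mem_left I cv hxI)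
      have : z = (r + cv) * x + s := by linear_combination hbcv - hbs
      rw [this]
      refine Submodule.add_mem _ ?_ ?_
      · exact (le_sup_left : _ ≤ span R ({x} : Set R) ⊔ _)
          (mem_span_singleton.mpr ⟨r + cv, by rw [smul_eq_mul]⟩)
      · refine (le_sup_right : _ ≤ span R ({x} : Set R) ⊔ _) ?_
        refine (le_sup_right : _ ≤ span R ({(0:R)} : Set R) ⊔ _) ?_
        rw [hKsup]
        exact hsK

end Backward

section Forward

variable {R : Type} [CommRing R] [IsLocalRing R]

lemma isUnit_one_sub_of_mem_max {t : R} (ht : t ∈ maximalIdeal R) : IsUnit (1 - t) := by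
  by_contra h
  rw [nonunit_iff_mem_max] at h
  have : (1 : R) ∈ maximalIdeal R := by
    have := Submodule.add_mem _ h ht
    simpa using this
  rw [← nonunit_iff_mem_max] at this
  exact this isUnit_one

lemma eq_zero_of_unit_mul {u x : R} (hu : IsUnit u) (h : u * x = 0) : x = 0 := by
  by_contra hx
  exact (nonunit_of_mul_eq_zero hx h) hu

/-- If a `Finsupp`-sum is a unit then some term is a unit. -/
lemma exists_isUnit_term {κ : Type*} (c : κ →₀ R) (f : κ → R → R)
    (h : IsUnit (c.sum f)) : ∃ a ∈ c.support, IsUnit (f a (c a)) := by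
  by_contra hno
  push_neg at hno
  have : c.sum f ∈ maximalIdeal R := by
    refine Submodule.sum_mem _ fun a ha => ?_
    rw [← nonunit_iff_mem_max]
    exact hno a ha
  rw [← nonunit_iff_mem_max] at this
  exact this h

/-- A `v`-divisible ideal is zero (uses that every ideal is a direct sum of cyclics). -/
lemma divisible_eq_bot (v : R) (hv : v ∈ maximalIdeal R)
    (hDS : ∀ I : Ideal R, I.IsDirectSumOfCyclics)
    (X : Ideal R) (hX : ∀ t ∈ X, ∃ γ ∈ X, t = v * γ) : X = ⊥ := by
  classical
  obtain ⟨ι, x, hxind, hxsup⟩ := hDS X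
  have hx0 : ∀ a : ι, x a = 0 := by
    intro a
    have hxa : x a ∈ X := by
      rw [← hxsup]
      exact (le_iSup (fun i => span R ({x i} : Set R)) a) (mem_span_singleton_self _)
    obtain ⟨γ, hγX, hγ⟩ := hX _ hxa
    rw [← hxsup, ← span_range_eq_iSup] at hγX
    obtain ⟨c, hc⟩ := Finsupp.mem_span_range_iff_exists_finsupp.mp hγX
    have hsum : x a = c.sum fun i r => (v * r) • x i := by
      rw [hγ, ← hc, Finsupp.mul_sum]
      refine Finsupp.sum_congr fun i _ => ?_
      rw [smul_eq_mul, smul_eq_mul]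
      ring
    have key : (1 - v * c a) • x a ∈ ⨆ i, ⨆ (_ : i ≠ a), span R ({x i} : Set R) := by
      have h1 : (1 - v * c a) • x a = x a - (v * c a) • x a := by
        rw [sub_smul, one_smul]
      by_cases ha : a ∈ c.support
      · rw [h1]
        nth_rewrite 1 [hsum]
        rw [Finsupp.sum, ← Finset.sum_erase_add _ _ ha, add_sub_cancel_right]
        refine Submodule.sum_mem _ fun i hi => ?_
        have hia : i ≠ a := Finset.ne_of_mem_erase hi
        refine (le_iSup₂ (f := fun (l : ι) (_ : l ≠ a) => span R ({x l} : Set R)) i hia) ?_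
        exact smul_mem _ _ (mem_span_singleton_self _)
      · have hca : c a = 0 := Finsupp.notMem_support_iff.mp ha
        rw [h1, hca, mul_zero, zero_smul, sub_zero]
        nth_rewrite 1 [hsum]
        rw [Finsupp.sum]
        refine Submodule.sum_mem _ fun i hi => ?_
        have hia : i ≠ a := fun h => ha (h ▸ hi)
        refine (le_iSup₂ (f := fun (l : ι) (_ : l ≠ a) => span R ({x l} : Set R)) i hia) ?_
        exact smul_mem _ _ (mem_span_singleton_self _)
    have h0 : (1 - v * c a) • x a = 0 :=
      (hxind a).le_bot ⟨smul_mem _ _ (mem_span_singleton_self _), key⟩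
    have hu : IsUnit (1 - v * c a) :=
      isUnit_one_sub_of_mem_max ((maximalIdeal R).mul_mem_right (c a) hv)
    rw [smul_eq_mul] at h0
    exact eq_zero_of_unit_mul hu h0
  rw [← hxsup, eq_bot_iff]
  refine iSup_le fun a => ?_
  rw [hx0 a, span_zero_singleton]

/-- Key forward lemma: if `v` is a summand-type element (every maximal-ideal multiple of `v`
falls into `span {v*v}`), then `R ⧸ Ann v` is a principal ideal ring. -/
lemma pir_of_summand (v : R) (hv : v ∈ maximalIdeal R)
    (hv_into : ∀ c ∈ maximalIdeal R, ∃ r : R, c * v = r * (v * v))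
    (hDS : ∀ I : Ideal R, I.IsDirectSumOfCyclics) :
    IsPrincipalIdealRing (R ⧸ Ideal.torsionOf R R v) := by
  classical
  have hpow : ∀ c ∈ maximalIdeal R, ∀ k : ℕ, ∃ r : R, c * v ^ (k + 1) = r * v ^ (k + 2) := by
    intro c hc k
    obtain ⟨r, hr⟩ := hv_into c hc
    exact ⟨r, by
      calc c * v ^ (k + 1) = (c * v) * v ^ k := by ring
      _ = (r * (v * v)) * v ^ k := by rw [hr]
      _ = r * v ^ (k + 2) := by ring⟩
  have hlevel : ∀ (y : R) (k : ℕ), y ∈ span R ({v ^ (k + 1)} : Set R) →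
      y ∉ span R ({v ^ (k + 2)} : Set R) → span R ({y} : Set R) = span R ({v ^ (k+1)} : Set R) := by
    intro y k h1 h2
    obtain ⟨c, hc⟩ := mem_span_singleton.mp h1
    have hcu : IsUnit c := by
      by_contra hcn
      rw [nonunit_iff_mem_max] at hcn
      obtain ⟨r, hr⟩ := hpow c hcn k
      apply h2
      rw [← hc, mem_span_singleton]
      exact ⟨r, by rw [smul_eq_mul, smul_eq_mul, hr]⟩
    rw [← hc, smul_eq_mul]
    exact span_singleton_unit_mul hcu
  set Dv : Ideal R := ⨅ (k : ℕ), span R ({v ^ (k + 1)} : Set R) with hDvdef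
  have hDvle : ∀ k : ℕ, Dv ≤ span R ({v ^ (k + 1)} : Set R) := fun k => iInf_le _ k
  have hDbot : Dv = ⊥ := by
    apply divisible_eq_bot v hv hDS
    intro t ht
    have ht2 : t ∈ span R ({v ^ 2} : Set R) := by
      have := hDvle 1 ht
      simpa using this
    obtain ⟨cc, hcc⟩ := mem_span_singleton.mp ht2
    have hcc' : cc * v ^ 2 = t := by rw [← smul_eq_mul]; exact hcc
    set Y : Ideal R := (Submodule.comap (mulBy v) (span R ({t} : Set R))) ⊓ span R ({v} : Set R)
      with hYdef
    have hsY : cc * v ∈ Y := by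
      refine Submodule.mem_inf.mpr ⟨?_, mem_span_singleton.mpr ⟨cc, rfl⟩⟩
      rw [Submodule.mem_comap, mulBy_apply]
      rw [show cc * v * v = t by linear_combination hcc']
      exact mem_span_singleton_self _
    by_cases hYD : Y ≤ Dv
    · exact ⟨cc * v, hYD hsY, by linear_combination - hcc'⟩
    · rw [SetLike.not_le_iff_exists] at hYD
      obtain ⟨yy, hyyY, hyyD⟩ := hYD
      have hyyv : yy ∈ span R ({v ^ (0 + 1)} : Set R) := by
        have := (Submodule.mem_inf.mp hyyY).2
        simpa using this
      have hex : ∃ k, yy ∉ span R ({v ^ (k + 1)} : Set R) := by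
        by_contra hall
        push_neg at hall
        exact hyyD ((Submodule.mem_iInf _).mpr hall)
      have hk₀pos : Nat.find hex ≠ 0 := by
        intro h
        have := Nat.find_spec hex
        rw [h] at this
        exact this hyyv
      obtain ⟨k₁, hk₁⟩ := Nat.exists_eq_succ_of_ne_zero hk₀pos
      have hmem : yy ∈ span R ({v ^ (k₁ + 1)} : Set R) :=
        not_not.mp (Nat.find_min hex (by omega))
      have hnot : yy ∉ span R ({v ^ (k₁ + 2)} : Set R) := by
        have := Nat.find_spec hex
        rw [hk₁] at this
        exact this
      have hspan := hlevel yy k₁ hmem hnot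
      have hvk : v ^ (k₁ + 1) ∈ Y := by
        have h1 : v ^ (k₁ + 1) ∈ span R ({yy} : Set R) := by
          rw [hspan]; exact mem_span_singleton_self _
        exact (span_le.mpr (Set.singleton_subset_iff.mpr hyyY)) h1
      have hvt : v ^ (k₁ + 2) ∈ span R ({t} : Set R) := by
        have := (Submodule.mem_inf.mp hvk).1
        rw [Submodule.mem_comap, mulBy_apply] at this
        rwa [show v ^ (k₁ + 1) * v = v ^ (k₁ + 2) by ring] at this
      have htD : span R ({t} : Set R) ≤ Dv :=
        span_le.mpr (Set.singleton_subset_iff.mpr ht)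
      have hvv : v ^ (k₁ + 2) ∈ span R ({v ^ (k₁ + 3)} : Set R) := by
        have h2 := (htD hvt)
        have := hDvle (k₁ + 2) h2
        simpa using this
      obtain ⟨d, hd⟩ := mem_span_singleton.mp hvv
      have hd' : d * v ^ (k₁ + 3) = v ^ (k₁ + 2) := by rw [← smul_eq_mul]; exact hd
      have hz : v ^ (k₁ + 2) = 0 := by
        have h1 : (1 - d * v) * v ^ (k₁ + 2) = 0 := by linear_combination - hd'
        exact eq_zero_of_unit_mul
          (isUnit_one_sub_of_mem_max ((maximalIdeal R).mul_mem_left d hv)) h1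
      have ht0 : t = 0 := by
        have h3 := hDvle (k₁ + 1) ht
        rw [show (k₁ + 1) + 1 = k₁ + 2 by ring, hz, span_zero_singleton] at h3
        simpa using h3
      exact ⟨0, Submodule.zero_mem _, by rw [ht0, mul_zero]⟩
  have hlev : ∀ y : R, y ∈ span R ({v} : Set R) → y ≠ 0 →
      ∃ k, y ∈ span R ({v ^ (k + 1)} : Set R) ∧ y ∉ span R ({v ^ (k + 2)} : Set R) := by
    intro y hy hy0
    have hy1 : y ∈ span R ({v ^ (0 + 1)} : Set R) := by simpa using hy
    have hex : ∃ j, y ∉ span R ({v ^ (j + 1)} : Set R) := by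
      by_contra hall
      push_neg at hall
      have : y ∈ Dv := (Submodule.mem_iInf _).mpr hall
      rw [hDbot] at this
      exact hy0 (by simpa using this)
    have hj₀pos : Nat.find hex ≠ 0 := by
      intro h
      have := Nat.find_spec hex
      rw [h] at this
      exact this hy1
    obtain ⟨k, hk⟩ := Nat.exists_eq_succ_of_ne_zero hj₀pos
    refine ⟨k, not_not.mp (Nat.find_min hex (by omega)), ?_⟩
    have := Nat.find_spec hex
    rw [hk] at this
    exact this
  have hcyc : ∀ W : Ideal R, W ≤ span R ({v} : Set R) → ∃ c : R, W = span R ({c * v} : Set R) := by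
    intro W hW
    by_cases hWbot : W = ⊥
    · exact ⟨0, by rw [hWbot, zero_mul, span_zero_singleton]⟩
    · obtain ⟨y₀, hy₀W, hy₀0⟩ := Submodule.exists_mem_ne_zero_of_ne_bot hWbot
      have hPex : ∃ k : ℕ, ∃ y : R, y ∈ W ∧ y ∈ span R ({v ^ (k + 1)} : Set R) ∧
          y ∉ span R ({v ^ (k + 2)} : Set R) := by
        obtain ⟨k, h1, h2⟩ := hlev y₀ (hW hy₀W) hy₀0
        exact ⟨k, y₀, hy₀W, h1, h2⟩
      set ks := Nat.find hPex with hksdef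
      obtain ⟨ys, hysW, hysmem, hysnot⟩ := Nat.find_spec hPex
      have hspan := hlevel ys ks hysmem hysnot
      refine ⟨v ^ ks, ?_⟩
      have hpowe : v ^ ks * v = v ^ (ks + 1) := by ring
      rw [hpowe]
      apply le_antisymm
      · intro y hyW
        by_cases hy0 : y = 0
        · rw [hy0]; exact Submodule.zero_mem _
        obtain ⟨k, hk1, hk2⟩ := hlev y (hW hyW) hy0
        have hkk : ks ≤ k := Nat.find_min' hPex ⟨y, hyW, hk1, hk2⟩
        obtain ⟨e, he⟩ := mem_span_singleton.mp hk1
        rw [← he]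
        rw [mem_span_singleton]
        refine ⟨e * v ^ (k - ks), ?_⟩
        rw [smul_eq_mul, smul_eq_mul]
        rw [show v ^ (k + 1) = v ^ (k - ks) * v ^ (ks + 1) by
          rw [← pow_add]; congr 1; omega]
        ring
      · rw [span_le, Set.singleton_subset_iff, SetLike.mem_coe]
        have h1 : v ^ (ks + 1) ∈ span R ({ys} : Set R) := by
          rw [hspan]; exact mem_span_singleton_self _
        exact (span_le.mpr (Set.singleton_subset_iff.mpr hysW)) h1
  -- now transfer to the quotient
  constructor
  intro J
  set q := Ideal.Quotient.mk (Ideal.torsionOf R R v) with hq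
  set W : Ideal R := Ideal.comap q J with hWdef
  have hker : Ideal.torsionOf R R v ≤ W := by
    intro r hr
    rw [hWdef, Ideal.mem_comap, hq]
    rw [Ideal.Quotient.eq_zero_iff_mem.mpr hr]
    exact J.zero_mem
  set W' : Ideal R := Submodule.map (mulBy v) W with hW'def
  have hW'le : W' ≤ span R ({v} : Set R) := by
    rw [hW'def]
    rintro _ ⟨r, _, rfl⟩
    rw [show (mulBy v) r = r • v from rfl]
    exact smul_mem _ _ (mem_span_singleton_self _)
  obtain ⟨c, hc⟩ := hcyc W' hW'le
  have hcv : c * v ∈ W' := by rw [hc]; exact mem_span_singleton_self _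
  obtain ⟨w₀, hw₀W, hw₀⟩ := hcv
  rw [show (mulBy v) w₀ = w₀ • v from rfl, smul_eq_mul] at hw₀
  refine ⟨⟨q w₀, ?_⟩⟩
  apply le_antisymm
  · intro j hj
    obtain ⟨r, rfl⟩ := Ideal.Quotient.mk_surjective j
    have hrW : r ∈ W := by rw [hWdef, Ideal.mem_comap]; exact hj
    have hrv : r * v ∈ W' := by
      rw [hW'def]
      exact ⟨r, hrW, by rw [show (mulBy v) r = r • v from rfl, smul_eq_mul]⟩
    rw [hc, mem_span_singleton] at hrv
    obtain ⟨s, hs⟩ := hrv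
    rw [smul_eq_mul] at hs
    have htor : r - s * w₀ ∈ Ideal.torsionOf R R v := by
      rw [Ideal.mem_torsionOf_iff, smul_eq_mul]
      linear_combination - hs - s * hw₀
    have : q (r - s * w₀) = 0 := Ideal.Quotient.eq_zero_iff_mem.mpr htor
    have hqr : q r = q s * q w₀ := by
      rw [map_sub, map_mul, sub_eq_zero] at this
      exact this
    rw [show (Ideal.Quotient.mk (Ideal.torsionOf R R v)) r = q r from rfl, hqr]
    exact Ideal.mul_mem_left _ _ (Ideal.subset_span rfl)
  · rw [span_le, Set.singleton_subset_iff, SetLike.mem_coe]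
    have : w₀ ∈ W := hw₀W
    rw [hWdef, Ideal.mem_comap] at this
    exact this

lemma forward_two (m : ℕ) (hm : 0 < m) (w : Fin m → R) (hw0 : ∀ i, w i ≠ 0)
    (hind : iSupIndep (fun i => span R ({w i} : Set R)))
    (hsup : (⨆ i, span R ({w i} : Set R)) = maximalIdeal R)
    (hDS : ∀ I : Ideal R, I.IsDirectSumOfCyclics) :
    ∃ i₁ i₂ : Fin m, ∀ i, ¬ IsSimpleModule R (span R ({w i} : Set R)) → i = i₁ ∨ i = i₂ := by
  classical
  have hcross : ∀ i j : Fin m, i ≠ j → w i * w j = 0 := by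
    intro i j hij
    have h1 : w i * w j ∈ span R ({w j} : Set R) := by
      rw [mem_span_singleton]; exact ⟨w i, rfl⟩
    have h2 : w i * w j ∈ span R ({w i} : Set R) := by
      rw [mem_span_singleton]; exact ⟨w j, mul_comm (w j) (w i)⟩
    have h3 : span R ({w j} : Set R) ≤ ⨆ l, ⨆ (_ : l ≠ i), span R ({w l} : Set R) :=
      le_iSup₂ (f := fun (l : Fin m) (_ : l ≠ i) => span R ({w l} : Set R)) j
        (fun h => hij h.symm)
    exact (hind i).le_bot ⟨h2, h3 h1⟩
  have hmul : ∀ (i : Fin m), ∀ c ∈ maximalIdeal R, ∃ r : R, c * w i = r * (w i * w i) := by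
    intro i c hc
    rw [← hsup, ← span_range_eq_iSup] at hc
    obtain ⟨co, hco⟩ := (mem_span_range_iff_exists_fun R).mp hc
    refine ⟨co i, ?_⟩
    rw [← hco, Finset.sum_mul, Finset.sum_eq_single i]
    · rw [smul_eq_mul]; ring
    · intro j _ hji
      rw [smul_eq_mul, mul_assoc, hcross j i hji, mul_zero]
    · intro h; exact absurd (Finset.mem_univ i) h
  have hsimple_of_sq : ∀ i, w i * w i = 0 → IsSimpleModule R (span R ({w i} : Set R)) := by
    intro i hsq
    rw [isSimpleModule_iff_isAtom]
    constructor
    · intro h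
      apply hw0 i
      have hmm : w i ∈ span R ({w i} : Set R) := mem_span_singleton_self _
      rw [h] at hmm
      simpa using hmm
    · intro b hb
      rw [eq_bot_iff]
      intro y hy
      obtain ⟨c, hc⟩ := mem_span_singleton.mp (le_of_lt hb hy)
      by_cases hcu : IsUnit c
      · exfalso
        obtain ⟨u, rfl⟩ := hcu
        have hwib : w i ∈ b := by
          have : w i = (↑u⁻¹ : R) • y := by
            rw [← hc, smul_smul, Units.inv_mul, one_smul]
          rw [this]
          exact smul_mem _ _ hy
        have : span R ({w i} : Set R) ≤ b := by
          rw [span_le, Set.singleton_subset_iff]; exact hwib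
        exact (not_le_of_gt hb) this
      · rw [nonunit_iff_mem_max] at hcu
        obtain ⟨r, hr⟩ := hmul i c hcu
        have : y = 0 := by
          rw [← hc, smul_eq_mul, hr, hsq, mul_zero]
        rw [this]; exact Submodule.zero_mem _
  have notriple : ∀ i j l : Fin m, i ≠ j → i ≠ l → j ≠ l →
      w i * w i ≠ 0 → w j * w j ≠ 0 → w l * w l ≠ 0 → False := by
    intro i j l hij hil hjl hsq1 hsq2 hsq3
    set w1 := w i with hw1def
    set w2 := w j with hw2def
    set w3 := w l with hw3def
    set g₁ := w1 + w2 with hg₁def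
    set g₂ := w1 + w3 with hg₂def
    set I : Ideal R := span R ({g₁, g₂} : Set R) with hIdef
    obtain ⟨ι, z, hzind, hzsup⟩ := hDS I
    have hzI : ∀ α, z α ∈ I := by
      intro α
      rw [← hzsup]
      exact (le_iSup (fun α' => span R ({z α'} : Set R)) α) (mem_span_singleton_self _)
    choose a b hab using fun α => mem_span_pair.mp (hzI α)
    have hw2g₁ : w2 * g₁ = w2 * w2 := by
      rw [hg₁def, mul_add, hcross j i (Ne.symm hij), zero_add]
    have hw2g₂ : w2 * g₂ = 0 := by
      rw [hg₂def, mul_add, hcross j i (Ne.symm hij), hcross j l hjl, add_zero]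
    have hw3g₁ : w3 * g₁ = 0 := by
      rw [hg₁def, mul_add, hcross l i (Ne.symm hil), hcross l j (Ne.symm hjl), add_zero]
    have hw3g₂ : w3 * g₂ = w3 * w3 := by
      rw [hg₂def, mul_add, hcross l i (Ne.symm hil), zero_add]
    have hw1g₁ : w1 * g₁ = w1 * w1 := by
      rw [hg₁def, mul_add, hcross i j hij, add_zero]
    have hw1g₂ : w1 * g₂ = w1 * w1 := by
      rw [hg₂def, mul_add, hcross i l hil, add_zero]
    have hzw2 : ∀ α, w2 * z α = a α * (w2 * w2) := by
      intro α
      have h := hab α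
      rw [smul_eq_mul, smul_eq_mul] at h
      linear_combination (-w2) * h + (a α) * hw2g₁ + (b α) * hw2g₂
    have hzw3 : ∀ α, w3 * z α = b α * (w3 * w3) := by
      intro α
      have h := hab α
      rw [smul_eq_mul, smul_eq_mul] at h
      linear_combination (-w3) * h + (a α) * hw3g₁ + (b α) * hw3g₂
    have hzw1 : ∀ α, w1 * z α = (a α + b α) * (w1 * w1) := by
      intro α
      have h := hab α
      rw [smul_eq_mul, smul_eq_mul] at h
      linear_combination (-w1) * h + (a α) * hw1g₁ + (b α) * hw1g₂
    have clash : ∀ (ww : R), ww * ww ≠ 0 → ∀ (co : ι → R),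
        (∀ α, ww * z α = co α * (ww * ww)) →
        ∀ α α', IsUnit (co α) → IsUnit (co α') → α = α' := by
      intro ww hww co hco α α' hα hα'
      by_contra hne
      have he1 : co α * co α' * (ww * ww) ∈ span R ({z α} : Set R) := by
        rw [mem_span_singleton]
        refine ⟨co α' * ww, ?_⟩
        rw [smul_eq_mul]
        linear_combination (co α') * (hco α)
      have he2 : co α * co α' * (ww * ww) ∈ span R ({z α'} : Set R) := by
        rw [mem_span_singleton]
        refine ⟨co α * ww, ?_⟩
        rw [smul_eq_mul]
        linear_combination (co α) * (hco α')
      have hsub : span R ({z α'} : Set R) ≤ ⨆ α'', ⨆ (_ : α'' ≠ α), span R ({z α''} : Set R) :=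
        le_iSup₂ (f := fun (α'' : ι) (_ : α'' ≠ α) => span R ({z α''} : Set R)) α'
          (fun h => hne h.symm)
      have h0 := (hzind α).le_bot ⟨he1, hsub he2⟩
      exact hww (eq_zero_of_unit_mul (hα.mul hα') h0)
    have hg₁I : g₁ ∈ I := subset_span (by simp)
    have hg₂I : g₂ ∈ I := subset_span (by simp)
    rw [← hzsup, ← span_range_eq_iSup] at hg₁I hg₂I
    obtain ⟨p, hp⟩ := Finsupp.mem_span_range_iff_exists_finsupp.mp hg₁I
    obtain ⟨q, hq⟩ := Finsupp.mem_span_range_iff_exists_finsupp.mp hg₂I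
    have hsumgen : ∀ (c : ι →₀ R) (g : R), (c.sum fun α r => r • z α) = g →
        ∀ (ww : R) (co : ι → R), (∀ α, ww * z α = co α * (ww * ww)) →
        ww * g = (c.sum fun α r => r * co α) * (ww * ww) := by
      intro c g hg ww co hco
      calc ww * g = c.sum fun α r => r * (ww * z α) := by
            rw [← hg, Finsupp.mul_sum]
            refine Finsupp.sum_congr fun α _ => ?_
            rw [smul_eq_mul]; ring
      _ = c.sum fun α r => (r * co α) * (ww * ww) := by
            refine Finsupp.sum_congr fun α _ => ?_
            rw [hco α]; ring
      _ = (c.sum fun α r => r * co α) * (ww * ww) := by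
            rw [Finsupp.sum_mul]
    have hpa : (1 - p.sum fun α r => r * a α) * (w2 * w2) = 0 := by
      have h1 := hsumgen p g₁ hp w2 a hzw2
      linear_combination h1 - hw2g₁
    have hpunit : IsUnit (p.sum fun α r => r * a α) :=
      isUnit_of_one_sub_nonunit (nonunit_of_mul_eq_zero hsq2 hpa)
    obtain ⟨α₀, hα₀supp, hα₀u⟩ := exists_isUnit_term p _ hpunit
    have ha₀ : IsUnit (a α₀) := isUnit_of_mul_isUnit_right hα₀u
    have hqb : (1 - q.sum fun α r => r * b α) * (w3 * w3) = 0 := by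
      have h1 := hsumgen q g₂ hq w3 b hzw3
      linear_combination h1 - hw3g₂
    have hqunit : IsUnit (q.sum fun α r => r * b α) :=
      isUnit_of_one_sub_nonunit (nonunit_of_mul_eq_zero hsq3 hqb)
    obtain ⟨α₁, hα₁supp, hα₁u⟩ := exists_isUnit_term q _ hqunit
    have hb₁ : IsUnit (b α₁) := isUnit_of_mul_isUnit_right hα₁u
    have hq₁ : IsUnit (q α₁) := isUnit_of_mul_isUnit_left hα₁u
    by_cases hαeq : α₀ = α₁
    · -- contradiction via w2 * g₂ = 0
      have h1 := hsumgen q g₂ hq w2 a hzw2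
      rw [hw2g₂] at h1
      have hunit : IsUnit (q.sum fun α r => r * a α) := by
        have hα₀q : α₀ ∈ q.support := by
          rw [hαeq]; exact hα₁supp
        rw [Finsupp.sum, ← Finset.add_sum_erase _ _ hα₀q]
        refine isUnit_add_of_nonunit ?_ ?_
        · have : IsUnit (q α₀) := by rw [hαeq]; exact hq₁
          exact this.mul ha₀
        · rw [nonunit_iff_mem_max]
          refine Submodule.sum_mem _ fun α hα => ?_
          have hαne : α ≠ α₀ := Finset.ne_of_mem_erase hα
          have hanu : ¬ IsUnit (a α) := by
            intro hu
            exact hαne (clash w2 hsq2 a hzw2 α α₀ hu ha₀)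
          rw [← nonunit_iff_mem_max] at *
          exact Ideal.mul_mem_left _ _ (by rw [nonunit_iff_mem_max] at hanu; exact hanu)
      exact hsq2 (eq_zero_of_unit_mul hunit h1.symm)
    · have hbα₀ : ¬ IsUnit (b α₀) := by
        intro hu
        exact hαeq (clash w3 hsq3 b hzw3 α₀ α₁ hu hb₁)
      have haα₁ : ¬ IsUnit (a α₁) := by
        intro hu
        exact hαeq (clash w2 hsq2 a hzw2 α₀ α₁ ha₀ hu)
      have hu1 : IsUnit (a α₀ + b α₀) := isUnit_add_of_nonunit ha₀ hbα₀
      have hu2 : IsUnit (a α₁ + b α₁) := by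
        rw [add_comm]
        exact isUnit_add_of_nonunit hb₁ haα₁
      exact hαeq (clash w1 hsq1 (fun α => a α + b α) hzw1 α₀ α₁ hu1 hu2)
  -- wrap up: the set of non-simple indices has at most two elements
  have hns : ∀ i : Fin m, ¬ IsSimpleModule R (span R ({w i} : Set R)) → w i * w i ≠ 0 := by
    intro i hn hsq
    exact hn (hsimple_of_sq i hsq)
  set P : Finset (Fin m) := Finset.univ.filter (fun i => w i * w i ≠ 0) with hPdef
  have hPmem : ∀ i, i ∈ P ↔ w i * w i ≠ 0 := by
    intro i; rw [hPdef]; simp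
  by_cases hP : P.Nonempty
  · obtain ⟨i₁, hi₁⟩ := hP
    by_cases hQ : (P.erase i₁).Nonempty
    · obtain ⟨i₂, hi₂⟩ := hQ
      have hi₂P : i₂ ∈ P := Finset.mem_of_mem_erase hi₂
      have hi₂ne : i₂ ≠ i₁ := Finset.ne_of_mem_erase hi₂
      refine ⟨i₁, i₂, fun i hi => ?_⟩
      by_contra hcon
      push_neg at hcon
      exact notriple i i₁ i₂ hcon.1 hcon.2 (Ne.symm hi₂ne)
        ((hPmem i).mp ((hPmem i).mpr (hns i hi)))
        ((hPmem i₁).mp hi₁) ((hPmem i₂).mp hi₂P)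
    · refine ⟨i₁, i₁, fun i hi => ?_⟩
      left
      by_contra hne
      apply hQ
      exact ⟨i, Finset.mem_erase.mpr ⟨hne, (hPmem i).mpr (hns i hi)⟩⟩
  · refine ⟨⟨0, hm⟩, ⟨0, hm⟩, fun i hi => ?_⟩
    exfalso
    exact hP ⟨i, (hPmem i).mpr (hns i hi)⟩

lemma mul_into_sq (m : ℕ) (w : Fin m → R)
    (hind : iSupIndep (fun i => span R ({w i} : Set R)))
    (hsup : (⨆ i, span R ({w i} : Set R)) = maximalIdeal R) :
    ∀ (i : Fin m), ∀ c ∈ maximalIdeal R, ∃ r : R, c * w i = r * (w i * w i) := by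
  classical
  have hcross : ∀ i j : Fin m, i ≠ j → w i * w j = 0 := by
    intro i j hij
    have h1 : w i * w j ∈ span R ({w j} : Set R) := by
      rw [mem_span_singleton]; exact ⟨w i, rfl⟩
    have h2 : w i * w j ∈ span R ({w i} : Set R) := by
      rw [mem_span_singleton]; exact ⟨w j, mul_comm (w j) (w i)⟩
    have h3 : span R ({w j} : Set R) ≤ ⨆ l, ⨆ (_ : l ≠ i), span R ({w l} : Set R) :=
      le_iSup₂ (f := fun (l : Fin m) (_ : l ≠ i) => span R ({w l} : Set R)) j
        (fun h => hij h.symm)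
    exact (hind i).le_bot ⟨h2, h3 h1⟩
  intro i c hc
  rw [← hsup, ← span_range_eq_iSup] at hc
  obtain ⟨co, hco⟩ := (mem_span_range_iff_exists_fun R).mp hc
  refine ⟨co i, ?_⟩
  rw [← hco, Finset.sum_mul, Finset.sum_eq_single i]
  · rw [smul_eq_mul]; ring
  · intro j _ hji
    rw [smul_eq_mul, mul_assoc, hcross j i hji, mul_zero]
  · intro h; exact absurd (Finset.mem_univ i) h

lemma extract_decomp (hFG : (maximalIdeal R).FG)
    (hDS : (maximalIdeal R : Ideal R).IsDirectSumOfCyclics) :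
    ∃ (m : ℕ) (w : Fin m → R), (∀ i, w i ≠ 0) ∧
      iSupIndep (fun i => span R ({w i} : Set R)) ∧
      (⨆ i, span R ({w i} : Set R)) = maximalIdeal R := by
  classical
  obtain ⟨ι, x, hind, hsup⟩ := hDS
  obtain ⟨F, hF⟩ := hFG
  have hrange : span R (Set.range x) = maximalIdeal R := by
    rw [span_range_eq_iSup]; exact hsup
  have hmemF : ∀ g : {g // g ∈ F}, (g : R) ∈ span R (Set.range x) := by
    intro g; rw [hrange, ← hF]; exact subset_span g.2
  choose T hT1 hT2 using fun (g : {g // g ∈ F}) =>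
    Submodule.mem_span_finite_of_mem_span (hmemF g)
  set T₀ : Finset R := F.attach.biUnion (fun g => T g) with hT₀def
  have hT₀sub : (↑T₀ : Set R) ⊆ Set.range x := by
    intro t ht
    rw [Finset.mem_coe, hT₀def, Finset.mem_biUnion] at ht
    obtain ⟨g, _, htg⟩ := ht
    exact hT1 g (Finset.mem_coe.mpr htg)
  set T₁ : Finset R := T₀.filter (fun t => t ≠ 0) with hT₁def
  have hT₁ne : ∀ t : {t // t ∈ T₁}, (t : R) ≠ 0 := fun t => (Finset.mem_filter.mp t.2).2
  have hT₁sub : ∀ t : {t // t ∈ T₁}, ∃ i : ι, x i = ↑t := by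
    intro t
    exact hT₀sub (Finset.mem_coe.mpr ((Finset.mem_filter.mp t.2).1))
  choose pre hpre using hT₁sub
  set e : {t // t ∈ T₁} ≃ Fin T₁.card := T₁.equivFin with hedef
  refine ⟨T₁.card, fun i => ↑(e.symm i), fun i => hT₁ne (e.symm i), ?_, ?_⟩
  · have hinj : Function.Injective (fun i : Fin T₁.card => pre (e.symm i)) := by
      intro i1 i2 h12
      have hx : x (pre (e.symm i1)) = x (pre (e.symm i2)) := by
        simp only at h12
        rw [h12]
      rw [hpre (e.symm i1), hpre (e.symm i2)] at hx
      have := e.symm.injective (Subtype.ext hx)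
      exact this
    have hcomp := hind.comp hinj
    have heq : (fun i : Fin T₁.card => span R ({(↑(e.symm i) : R)} : Set R)) =
        ((fun j : ι => span R ({x j} : Set R)) ∘ (fun i => pre (e.symm i))) := by
      funext i
      simp only [Function.comp]
      rw [hpre (e.symm i)]
    rw [heq]
    exact hcomp
  · apply le_antisymm
    · refine iSup_le fun i => ?_
      rw [← hsup]
      show span R ({(↑(e.symm i) : R)} : Set R) ≤ _
      have hxx : (↑(e.symm i) : R) = x (pre (e.symm i)) := (hpre _).symm
      rw [hxx]
      exact le_iSup (fun j => span R ({x j} : Set R)) (pre (e.symm i))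
    · rw [← hF, Ideal.span_le]
      intro g hg
      have h1 : g ∈ span R (↑T₀ : Set R) := by
        refine span_mono ?_ (hT2 ⟨g, hg⟩)
        refine Finset.coe_subset.mpr ?_
        exact Finset.subset_biUnion_of_mem (fun g => T g) (Finset.mem_attach _ ⟨g, hg⟩)
      have h2 : span R (↑T₀ : Set R) ≤ span R (insert (0:R) (↑T₁ : Set R)) := by
        apply span_mono
        intro t ht
        by_cases ht0 : t = 0
        · rw [ht0]; exact Set.mem_insert _ _
        · exact Set.mem_insert_of_mem _
            (Finset.mem_coe.mpr (Finset.mem_filter.mpr ⟨Finset.mem_coe.mp ht, ht0⟩))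
      have h3 : span R (insert (0:R) (↑T₁ : Set R)) = span R (↑T₁ : Set R) :=
        span_insert_zero
      have h4 : span R (↑T₁ : Set R) =
          ⨆ (t : {t // t ∈ T₁}), span R ({(t : R)} : Set R) := by
        have hr : Set.range (fun t : {t // t ∈ T₁} => (t : R)) = (↑T₁ : Set R) := by
          ext r
          simp [Set.mem_range]
        rw [← hr, span_range_eq_iSup]
      have h5 : (⨆ (t : {t // t ∈ T₁}), span R ({(t : R)} : Set R)) =
          ⨆ (i : Fin T₁.card), span R ({(↑(e.symm i) : R)} : Set R) :=
        (Equiv.iSup_comp (g := fun t : {t // t ∈ T₁} => span R ({(t : R)} : Set R))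
          e.symm).symm
      rw [SetLike.mem_coe]
      have hfin := h2 h1
      rw [h3, h4, h5] at hfin
      show g ∈ ⨆ (i : Fin T₁.card), span R ({(↑(e.symm i) : R)} : Set R)
      exact hfin

end Forward

/-- `M` is finitely generated and every ideal of the local ring `R` is a direct sum of
cyclic modules iff `M = Rv₁ ⊕ ⋯ ⊕ Rvₙ` with each `R/Ann(vᵢ)` a principal ideal ring and
at most two of the `Rvᵢ` not simple. -/
theorem fg_and_directSums_iff_finite_decomposition (R : Type) [CommRing R] [IsLocalRing R] :
    ((IsLocalRing.maximalIdeal R).FG ∧ ∀ I : Ideal R, I.IsDirectSumOfCyclics) ↔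
      ∃ (n : ℕ), 0 < n ∧ ∃ v : Fin n → R,
        iSupIndep (fun i => Submodule.span R ({v i} : Set R)) ∧
        (⨆ i, Submodule.span R ({v i} : Set R)) = IsLocalRing.maximalIdeal R ∧
        (∀ i, IsPrincipalIdealRing (R ⧸ Ideal.torsionOf R R (v i))) ∧
        ∃ i₁ i₂ : Fin n, ∀ i, ¬ IsSimpleModule R (Submodule.span R ({v i} : Set R)) →
          i = i₁ ∨ i = i₂ := by
  constructor
  · rintro ⟨hFG, hDS⟩
    obtain ⟨m, w, hw0, hind, hsup⟩ := extract_decomp hFG (hDS _)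
    by_cases hm : 0 < m
    · refine ⟨m, hm, w, hind, hsup, ?_, ?_⟩
      · intro i
        have hvmax : w i ∈ maximalIdeal R := by
          rw [← hsup]
          exact (le_iSup (fun l => span R ({w l} : Set R)) i) (mem_span_singleton_self _)
        exact pir_of_summand (w i) hvmax (mul_into_sq m w hind hsup i) hDS
      · exact forward_two m hm w hw0 hind hsup hDS
    · have hm0 : m = 0 := Nat.eq_zero_of_not_pos hm
      subst hm0
      have hMbot : maximalIdeal R = ⊥ := by
        rw [← hsup]
        rw [show (⨆ i : Fin 0, span R ({w i} : Set R)) = ⊥ from iSup_of_empty _]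
      refine ⟨1, one_pos, fun _ => 0, ?_, ?_, ?_,
        ⟨0, 0, fun i _ => Or.inl (Subsingleton.elim i 0)⟩⟩
      · intro o
        have hbot : (⨆ o', ⨆ (_ : o' ≠ o), span R ({((fun _ => (0:R)) o')} : Set R)) = ⊥ := by
          rw [eq_bot_iff]
          exact iSup_le fun o' => iSup_le fun h => absurd (Subsingleton.elim o' o) h
        rw [hbot]
        exact disjoint_bot_right
      · show (⨆ _ : Fin 1, span R ({(0:R)} : Set R)) = maximalIdeal R
        rw [iSup_const, span_zero_singleton, hMbot]
      · intro i
        exact pir_of_summand 0 (Submodule.zero_mem _) (fun c hc => ⟨0, by ring⟩) hDS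
  · rintro ⟨n, hn, v, hind, hsup, hPIR, i₁, i₂, hts⟩
    constructor
    · rw [← hsup, ← span_range_eq_iSup]
      exact Submodule.fg_span (Set.finite_range v)
    · exact backward_ideals n v hind hsup hPIR i₁ i₂ hts
end

section
/- Let F be a field, n ≥ 3 an integer, and R = F[X,Y]/(Xⁿ, Yⁿ, XY), a local Artinian ring with maximal ideal M = Rx ⊕ Ry where x, y are the images of X, Y. Let z = x + y. Then Ann(z) = Rx^{n-1} ⊕ Ry^{n-1}, and the ring R/Ann(z) is not a principal ideal ring. -/
section AuxAll
open MvPolynomial Finsupp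

noncomputable section Aux
variable {F : Type} [Field F]

def e₀ : MvPolynomial (Fin 2) F →ₐ[F] MvPolynomial (Fin 2) F := aeval ![X 0, 0]
def e₁ : MvPolynomial (Fin 2) F →ₐ[F] MvPolynomial (Fin 2) F := aeval ![0, X 1]

@[simp] lemma e₀_X0 : e₀ (X 0 : MvPolynomial (Fin 2) F) = X 0 := by simp [e₀]
@[simp] lemma e₀_X1 : e₀ (X 1 : MvPolynomial (Fin 2) F) = 0 := by simp [e₀]
@[simp] lemma e₁_X0 : e₁ (X 0 : MvPolynomial (Fin 2) F) = 0 := by simp [e₁]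
@[simp] lemma e₁_X1 : e₁ (X 1 : MvPolynomial (Fin 2) F) = X 1 := by simp [e₁]
@[simp] lemma e₀_C (a : F) : e₀ (C a : MvPolynomial (Fin 2) F) = C a := by simp [e₀]
@[simp] lemma e₁_C (a : F) : e₁ (C a : MvPolynomial (Fin 2) F) = C a := by simp [e₁]

lemma X1_dvd_sub_e₀ (p : MvPolynomial (Fin 2) F) : X 1 ∣ p - e₀ p := by
  induction p using MvPolynomial.induction_on with
  | C a => simp
  | add p q hp hq =>
    have h : p + q - e₀ (p + q) = (p - e₀ p) + (q - e₀ q) := by rw [map_add]; ring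
    rw [h]; exact dvd_add hp hq
  | mul_X p j hp =>
    fin_cases j
    · show X 1 ∣ p * X 0 - e₀ (p * X 0)
      have h : p * X 0 - e₀ (p * X 0) = (p - e₀ p) * X 0 := by
        rw [map_mul, e₀_X0]; ring
      rw [h]; exact hp.mul_right _
    · show X 1 ∣ p * X 1 - e₀ (p * X 1)
      have h : p * X 1 - e₀ (p * X 1) = p * X 1 := by rw [map_mul, e₀_X1]; ring
      rw [h]; exact Dvd.intro_left p rfl

lemma X0_dvd_sub_e₁ (p : MvPolynomial (Fin 2) F) : X 0 ∣ p - e₁ p := by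
  induction p using MvPolynomial.induction_on with
  | C a => simp
  | add p q hp hq =>
    have h : p + q - e₁ (p + q) = (p - e₁ p) + (q - e₁ q) := by rw [map_add]; ring
    rw [h]; exact dvd_add hp hq
  | mul_X p j hp =>
    fin_cases j
    · show X 0 ∣ p * X 0 - e₁ (p * X 0)
      have h : p * X 0 - e₁ (p * X 0) = p * X 0 := by rw [map_mul, e₁_X0]; ring
      rw [h]; exact Dvd.intro_left p rfl
    · show X 0 ∣ p * X 1 - e₁ (p * X 1)
      have h : p * X 1 - e₁ (p * X 1) = (p - e₁ p) * X 1 := by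
        rw [map_mul, e₁_X1]; ring
      rw [h]; exact hp.mul_right _

lemma e₀_e₀ (p : MvPolynomial (Fin 2) F) : e₀ (e₀ p) = e₀ p := by
  have h : (e₀ (F := F)).comp e₀ = e₀ := by
    apply MvPolynomial.algHom_ext
    intro i; fin_cases i <;> simp
  exact congrArg (fun g => g p) h |>.symm ▸ (DFunLike.congr_fun h p)

lemma e₁_e₀ (p : MvPolynomial (Fin 2) F) : e₁ (e₀ p) = C (constantCoeff p) := by
  have h : (e₁ (F := F)).comp e₀ = aeval (fun _ => 0) := by
    apply MvPolynomial.algHom_ext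
    intro i; fin_cases i <;> simp
  have h2 : e₁ (e₀ p) = aeval (fun _ => 0) p := DFunLike.congr_fun h p
  rw [h2, aeval_zero', MvPolynomial.algebraMap_eq]

lemma e₀_e₁ (p : MvPolynomial (Fin 2) F) : e₀ (e₁ p) = C (constantCoeff p) := by
  have h : (e₀ (F := F)).comp e₁ = aeval (fun _ => 0) := by
    apply MvPolynomial.algHom_ext
    intro i; fin_cases i <;> simp
  have h2 : e₀ (e₁ p) = aeval (fun _ => 0) p := DFunLike.congr_fun h p
  rw [h2, aeval_zero', MvPolynomial.algebraMap_eq]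

lemma constantCoeff_e₀ (p : MvPolynomial (Fin 2) F) :
    constantCoeff (e₀ p) = constantCoeff p := by
  apply MvPolynomial.C_injective (Fin 2) F
  rw [← e₁_e₀ (e₀ p), e₀_e₀, e₁_e₀]

lemma constantCoeff_e₁ (p : MvPolynomial (Fin 2) F) :
    constantCoeff (e₁ p) = constantCoeff p := by
  apply MvPolynomial.C_injective (Fin 2) F
  rw [← e₀_e₁ (e₁ p), ← e₀_e₁ p]
  congr 1
  have h : (e₁ (F := F)).comp e₁ = e₁ := by
    apply MvPolynomial.algHom_ext
    intro i; fin_cases i <;> simp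
  exact DFunLike.congr_fun h p

end Aux

section More
variable {F : Type} [Field F]

lemma leib (i : Fin 2) (p q : MvPolynomial (Fin 2) F) :
    coeff (single i 1) (p * q)
      = constantCoeff p * coeff (single i 1) q
        + coeff (single i 1) p * constantCoeff q := by
  have h1 : Finset.HasAntidiagonal.antidiagonal (1:ℕ) = {(0,1),(1,0)} := by decide
  rw [coeff_mul, Finsupp.antidiagonal_single, h1, Finset.map_insert, Finset.map_singleton,
    Finset.sum_insert (by simp), Finset.sum_singleton]
  simp [constantCoeff_eq]

lemma decomp (p : MvPolynomial (Fin 2) F) :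
    ∃ w, p = X 0 * X 1 * w + e₀ p + e₁ p - C (constantCoeff p) := by
  set q : MvPolynomial (Fin 2) F :=
    p - e₀ p - e₁ p + C (constantCoeff p) with hq
  have h0 : X 0 ∣ q := by
    have h1 : q = (p - e₁ p) - (e₀ p - e₁ (e₀ p)) := by
      rw [e₁_e₀, hq]; ring
    rw [h1]
    exact dvd_sub (X0_dvd_sub_e₁ p) (X0_dvd_sub_e₁ (e₀ p))
  obtain ⟨a, ha⟩ := h0
  have he : e₀ q = 0 := by
    have : e₀ q = e₀ p - e₀ (e₀ p) - e₀ (e₁ p) + C (constantCoeff p) := by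
      rw [hq]; rw [map_add, map_sub, map_sub, e₀_C]
    rw [this, e₀_e₀, e₀_e₁]; ring
  have ha0 : e₀ a = 0 := by
    have : (X 0 : MvPolynomial (Fin 2) F) * e₀ a = 0 := by
      rw [← e₀_X0, ← map_mul, ← ha, he]
    rcases mul_eq_zero.mp this with h | h
    · exact absurd h (X_ne_zero 0)
    · exact h
  have h1 : X 1 ∣ a := by
    have := X1_dvd_sub_e₀ a
    rwa [ha0, sub_zero] at this
  obtain ⟨w, hw⟩ := h1
  refine ⟨w, ?_⟩
  have : q = X 0 * X 1 * w := by rw [ha, hw]; ring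
  rw [hq] at this
  linear_combination this

lemma mem_span_iff {m : ℕ} (hm : 1 ≤ m) (p : MvPolynomial (Fin 2) F) :
    p ∈ Ideal.span ({X 0 ^ m, X 1 ^ m, X 0 * X 1} : Set (MvPolynomial (Fin 2) F)) ↔
      X 0 ^ m ∣ e₀ p ∧ X 1 ^ m ∣ e₁ p := by
  constructor
  · intro hp
    rw [Ideal.mem_span_insert] at hp
    obtain ⟨a, z, hz, rfl⟩ := hp
    rw [Ideal.mem_span_insert] at hz
    obtain ⟨b, w, hw, rfl⟩ := hz
    rw [Ideal.mem_span_singleton] at hw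
    obtain ⟨c, rfl⟩ := hw
    have hx1 : e₀ (X 1 ^ m : MvPolynomial (Fin 2) F) = 0 := by
      rw [map_pow, e₀_X1, zero_pow (by omega)]
    have hx0 : e₁ (X 0 ^ m : MvPolynomial (Fin 2) F) = 0 := by
      rw [map_pow, e₁_X0, zero_pow (by omega)]
    constructor
    · have : e₀ (a * X 0 ^ m + (b * X 1 ^ m + X 0 * X 1 * c))
          = e₀ a * X 0 ^ m := by
        rw [map_add, map_add, map_mul, map_mul, map_mul, map_mul,
          hx1, e₀_X1, map_pow, e₀_X0]
        ring
      rw [this]; exact Dvd.intro_left _ rfl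
    · have : e₁ (a * X 0 ^ m + (b * X 1 ^ m + X 0 * X 1 * c))
          = e₁ b * X 1 ^ m := by
        rw [map_add, map_add, map_mul, map_mul, map_mul, map_mul,
          hx0, e₁_X0, map_pow, e₁_X1]
        ring
      rw [this]; exact Dvd.intro_left _ rfl
  · rintro ⟨⟨u, hu⟩, ⟨v, hv⟩⟩
    have hc : constantCoeff p = 0 := by
      rw [← constantCoeff_e₀ p, hu, map_mul, map_pow, constantCoeff_X,
        zero_pow (by omega), zero_mul]
    obtain ⟨w, hw⟩ := decomp p
    rw [hc, map_zero, sub_zero, hu, hv] at hw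
    rw [hw]
    have m1 : (X 0 : MvPolynomial (Fin 2) F) * X 1 ∈
        Ideal.span ({X 0 ^ m, X 1 ^ m, X 0 * X 1} : Set (MvPolynomial (Fin 2) F)) :=
      Ideal.subset_span (by simp)
    have m2 : (X 0 : MvPolynomial (Fin 2) F) ^ m ∈
        Ideal.span ({X 0 ^ m, X 1 ^ m, X 0 * X 1} : Set (MvPolynomial (Fin 2) F)) :=
      Ideal.subset_span (by simp)
    have m3 : (X 1 : MvPolynomial (Fin 2) F) ^ m ∈
        Ideal.span ({X 0 ^ m, X 1 ^ m, X 0 * X 1} : Set (MvPolynomial (Fin 2) F)) :=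
      Ideal.subset_span (by simp)
    exact add_mem (add_mem (Ideal.mul_mem_right _ _ m1) (Ideal.mul_mem_right _ _ m2))
      (Ideal.mul_mem_right _ _ m3)

end More

section Coeffs
variable {F : Type} [Field F]

lemma coeff_single_pow (i j : Fin 2) {m : ℕ} (hm : 2 ≤ m) :
    coeff (single i 1) ((X j : MvPolynomial (Fin 2) F) ^ m) = 0 := by
  rw [X_pow_eq_monomial, coeff_monomial, if_neg]
  intro h
  have := DFunLike.congr_fun h j
  simp only [Finsupp.single_apply, if_pos rfl] at this
  split_ifs at this <;> omega

lemma constantCoeff_X_pow (j : Fin 2) {m : ℕ} (hm : 1 ≤ m) :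
    constantCoeff ((X j : MvPolynomial (Fin 2) F) ^ m) = 0 := by
  rw [map_pow, constantCoeff_X, zero_pow (by omega)]

lemma span_coeffs {m : ℕ} (hm : 2 ≤ m) {p : MvPolynomial (Fin 2) F}
    (hp : p ∈ Ideal.span ({X 0 ^ m, X 1 ^ m, X 0 * X 1} : Set (MvPolynomial (Fin 2) F))) :
    (∀ i, coeff (single i 1) p = 0) ∧ constantCoeff p = 0 := by
  rw [Ideal.mem_span_insert] at hp
  obtain ⟨a, z, hz, rfl⟩ := hp
  rw [Ideal.mem_span_insert] at hz
  obtain ⟨b, w, hw, rfl⟩ := hz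
  rw [Ideal.mem_span_singleton] at hw
  obtain ⟨c, rfl⟩ := hw
  have hc1 : constantCoeff ((X 0 : MvPolynomial (Fin 2) F) ^ m) = 0 :=
    constantCoeff_X_pow 0 (by omega)
  have hc2 : constantCoeff ((X 1 : MvPolynomial (Fin 2) F) ^ m) = 0 :=
    constantCoeff_X_pow 1 (by omega)
  have hc3 : constantCoeff ((X 0 : MvPolynomial (Fin 2) F) * X 1) = 0 := by
    rw [map_mul, constantCoeff_X, zero_mul]
  constructor
  · intro i
    have l3 : coeff (single i 1) ((X 0 : MvPolynomial (Fin 2) F) * X 1) = 0 := by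
      rw [leib, constantCoeff_X, constantCoeff_X, zero_mul, mul_zero, add_zero]
    rw [coeff_add, coeff_add, leib, leib, leib, coeff_single_pow _ _ hm,
      coeff_single_pow _ _ hm, hc1, hc2, hc3, l3]
    ring
  · rw [map_add, map_add, map_mul, map_mul, map_mul, hc1, hc2, hc3]
    ring

end Coeffs


end AuxAll

open MvPolynomial in
/-- For `R = F[X,Y]/(Xⁿ, Yⁿ, XY)` with `n ≥ 3` and `z = x + y`, one has
`Ann(z) = Rx^{n-1} ⊕ Ry^{n-1}` and `R/Ann(z)` is not a principal ideal ring. -/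
theorem ann_of_sum_and_quotient_not_pir (F : Type) [Field F] (n : ℕ) (hn : 3 ≤ n) :
    ∀ (R : Type) (_ : CommRing R)
      (f : MvPolynomial (Fin 2) F →+* R),
      Function.Surjective f →
      RingHom.ker f = Ideal.span ({(X 0 : MvPolynomial (Fin 2) F) ^ n, (X 1) ^ n,
        X 0 * X 1} : Set (MvPolynomial (Fin 2) F)) →
      ∀ x y z : R, x = f (X 0) → y = f (X 1) → z = x + y →
        Ideal.torsionOf R R z =
            Submodule.span R ({x ^ (n - 1)} : Set R) ⊔
              Submodule.span R ({y ^ (n - 1)} : Set R) ∧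
          Disjoint (Submodule.span R ({x ^ (n - 1)} : Set R))
            (Submodule.span R ({y ^ (n - 1)} : Set R)) ∧
          ¬ IsPrincipalIdealRing (R ⧸ Ideal.torsionOf R R z) := by
  intro R _ f hf hker x y z hx hy hz
  subst hx hy hz
  have hn2 : 2 ≤ n - 1 := by omega
  have hpow : (X 0 : MvPolynomial (Fin 2) F) ^ (n - 1) * X 0 = X 0 ^ n := by
    rw [← pow_succ]; congr 1; omega
  have hpow' : (X 1 : MvPolynomial (Fin 2) F) ^ (n - 1) * X 1 = X 1 ^ n := by
    rw [← pow_succ]; congr 1; omega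
  set J : Ideal (MvPolynomial (Fin 2) F) :=
    Ideal.span ({X 0 ^ (n - 1), X 1 ^ (n - 1), X 0 * X 1} : Set (MvPolynomial (Fin 2) F))
    with hJ
  have hker' : ∀ p : MvPolynomial (Fin 2) F,
      f p = 0 ↔ X 0 ^ n ∣ e₀ p ∧ X 1 ^ n ∣ e₁ p := by
    intro p
    rw [← RingHom.mem_ker, hker, mem_span_iff (by omega)]
  have htor : ∀ p : MvPolynomial (Fin 2) F,
      f p ∈ Ideal.torsionOf R R (f (X 0) + f (X 1)) ↔ p ∈ J := by
    intro p
    rw [Ideal.mem_torsionOf_iff, smul_eq_mul, ← map_add, ← map_mul, hker' _,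
      hJ, mem_span_iff (by omega : 1 ≤ n - 1)]
    have he0 : e₀ (p * (X 0 + X 1)) = e₀ p * X 0 := by
      rw [map_mul, map_add, e₀_X0, e₀_X1, add_zero]
    have he1 : e₁ (p * (X 0 + X 1)) = e₁ p * X 1 := by
      rw [map_mul, map_add, e₁_X0, e₁_X1, zero_add]
    rw [he0, he1]
    constructor
    · rintro ⟨⟨u, hu⟩, ⟨v, hv⟩⟩
      constructor
      · refine ⟨u, mul_right_cancel₀ (X_ne_zero 0) ?_⟩
        rw [hu, ← hpow]; ring
      · refine ⟨v, mul_right_cancel₀ (X_ne_zero 1) ?_⟩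
        rw [hv, ← hpow']; ring
    · rintro ⟨⟨u, hu⟩, ⟨v, hv⟩⟩
      constructor
      · refine ⟨u, ?_⟩; rw [hu, ← hpow]; ring
      · refine ⟨v, ?_⟩; rw [hv, ← hpow']; ring
  have hX0J : (X 0 : MvPolynomial (Fin 2) F) ^ (n - 1) ∈ J := Ideal.subset_span (by simp)
  have hX1J : (X 1 : MvPolynomial (Fin 2) F) ^ (n - 1) ∈ J := Ideal.subset_span (by simp)
  have hfX01 : f (X 0 * X 1) = 0 := by
    rw [← RingHom.mem_ker, hker]; exact Ideal.subset_span (by simp)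
  -- Part 1
  have part1 : Ideal.torsionOf R R (f (X 0) + f (X 1)) =
      Submodule.span R ({f (X 0) ^ (n - 1)} : Set R) ⊔
        Submodule.span R ({f (X 1) ^ (n - 1)} : Set R) := by
    apply le_antisymm
    · intro r hr
      obtain ⟨p, rfl⟩ := hf r
      have hpJ : p ∈ J := (htor p).mp hr
      revert hpJ
      refine fun hpJ => ?_
      have hle : J ≤ Ideal.comap f
          (Submodule.span R ({f (X 0) ^ (n - 1)} : Set R) ⊔
            Submodule.span R ({f (X 1) ^ (n - 1)} : Set R) : Ideal R) := by
        rw [hJ, Ideal.span_le]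
        rintro q hq
        simp only [Set.mem_insert_iff, Set.mem_singleton_iff] at hq
        rcases hq with rfl | rfl | rfl
        · exact Ideal.mem_comap.mpr (Submodule.mem_sup_left
            (by rw [map_pow]; exact Submodule.mem_span_singleton_self _))
        · exact Ideal.mem_comap.mpr (Submodule.mem_sup_right
            (by rw [map_pow]; exact Submodule.mem_span_singleton_self _))
        · exact Ideal.mem_comap.mpr (by rw [hfX01]; exact zero_mem _)
      exact hle hpJ
    · refine sup_le ?_ ?_ <;> rw [Submodule.span_le, Set.singleton_subset_iff]
      · rw [← map_pow]; exact SetLike.mem_coe.mpr ((htor _).mpr hX0J)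
      · rw [← map_pow]; exact SetLike.mem_coe.mpr ((htor _).mpr hX1J)
  refine ⟨part1, ?_, ?_⟩
  -- Part 2
  · rw [Submodule.disjoint_def]
    intro r h1 h2
    rw [Submodule.mem_span_singleton] at h1 h2
    obtain ⟨a, ha⟩ := h1
    obtain ⟨b, hb⟩ := h2
    obtain ⟨A, rfl⟩ := hf a
    obtain ⟨B, rfl⟩ := hf b
    rw [smul_eq_mul, ← map_pow, ← map_mul] at ha hb
    have hsub : f (A * X 0 ^ (n - 1) - B * X 1 ^ (n - 1)) = 0 := by
      rw [map_sub, ha, hb, sub_self]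
    rw [hker'] at hsub
    obtain ⟨⟨u, hu⟩, -⟩ := hsub
    have he : e₀ (A * X 0 ^ (n - 1) - B * X 1 ^ (n - 1)) = e₀ A * X 0 ^ (n - 1) := by
      rw [map_sub, map_mul, map_mul, map_pow, map_pow, e₀_X0, e₀_X1,
        zero_pow (by omega : n - 1 ≠ 0), mul_zero, sub_zero]
    rw [he] at hu
    have hA : e₀ A = X 0 * u := by
      apply mul_right_cancel₀ (pow_ne_zero (n - 1) (X_ne_zero 0))
      rw [hu, ← hpow]; ring
    rw [← ha, (hker' (A * X 0 ^ (n - 1))).mpr ?_]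
    · refine ⟨⟨u, ?_⟩, ⟨0, ?_⟩⟩
      · rw [map_mul, map_pow, e₀_X0, hA, ← hpow]; ring
      · rw [map_mul, map_pow, e₁_X0, zero_pow (by omega : n - 1 ≠ 0), mul_zero, mul_zero]
  -- Part 3
  · intro hP
    set T := Ideal.torsionOf R R (f (X 0) + f (X 1)) with hT
    let π : MvPolynomial (Fin 2) F →+* R ⧸ T := (Ideal.Quotient.mk T).comp f
    have hπs : Function.Surjective π :=
      (Ideal.Quotient.mk_surjective).comp hf
    have hkπ : ∀ p, π p = 0 ↔ p ∈ J := by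
      intro p
      show Ideal.Quotient.mk T (f p) = 0 ↔ _
      rw [Ideal.Quotient.eq_zero_iff_mem]
      exact htor p
    set MQ : Ideal (R ⧸ T) := Ideal.span {π (X 0), π (X 1)} with hMQ
    obtain ⟨g, hg⟩ := (hP.principal MQ)
    obtain ⟨G, rfl⟩ := hπs g
    have hx0 : π (X 0) ∈ MQ := Ideal.subset_span (by simp)
    have hx1 : π (X 1) ∈ MQ := Ideal.subset_span (by simp)
    rw [hg] at hx0 hx1
    obtain ⟨s, hs⟩ := Submodule.mem_span_singleton.mp hx0
    obtain ⟨t, ht⟩ := Submodule.mem_span_singleton.mp hx1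
    rw [smul_eq_mul] at hs ht
    obtain ⟨S, rfl⟩ := hπs s
    obtain ⟨Tp, rfl⟩ := hπs t
    have hgM : π G ∈ MQ := by rw [hg]; exact Ideal.mem_span_singleton_self _
    rw [hMQ, Ideal.mem_span_pair] at hgM
    obtain ⟨c, d, hcd⟩ := hgM
    obtain ⟨Cp, rfl⟩ := hπs c
    obtain ⟨Dp, rfl⟩ := hπs d
    have h1 : X 0 - S * G ∈ J := by
      rw [← hkπ, map_sub, map_mul, hs, sub_self]
    have h2 : X 1 - Tp * G ∈ J := by
      rw [← hkπ, map_sub, map_mul, ht, sub_self]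
    have h3 : G - (Cp * X 0 + Dp * X 1) ∈ J := by
      rw [← hkπ, map_sub, map_add, map_mul, map_mul, hcd, sub_self]
    obtain ⟨hψ1, hε1⟩ := span_coeffs hn2 h1
    obtain ⟨hψ2, hε2⟩ := span_coeffs hn2 h2
    obtain ⟨-, hε3⟩ := span_coeffs hn2 h3
    have hεG : constantCoeff G = 0 := by
      rw [map_sub, map_add, map_mul, map_mul, constantCoeff_X, constantCoeff_X,
        mul_zero, mul_zero, add_zero, sub_zero] at hε3
      exact hε3
    have hX00 : coeff (Finsupp.single (0 : Fin 2) 1) (X 0 : MvPolynomial (Fin 2) F) = 1 := coeff_X_same 0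
    have hX01 : coeff (Finsupp.single (0 : Fin 2) 1) (X 1 : MvPolynomial (Fin 2) F) = 0 := by
      rw [coeff_X', if_neg]
      intro h
      have := DFunLike.congr_fun h 0
      simp [Finsupp.single_apply] at this
    have hX11 : coeff (Finsupp.single (1 : Fin 2) 1) (X 1 : MvPolynomial (Fin 2) F) = 1 := coeff_X_same 1
    have e1 := hψ1 0
    rw [coeff_sub, hX00, leib, hεG, mul_zero, add_zero, sub_eq_zero] at e1
    -- e1 : 1 = constantCoeff S * coeff (Finsupp.single 0 1) G
    have e2 := hψ2 0
    rw [coeff_sub, hX01, leib, hεG, mul_zero, add_zero, zero_sub, neg_eq_zero] at e2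
    -- e2 : constantCoeff Tp * coeff (Finsupp.single 0 1) G = 0
    have e3 := hψ2 1
    rw [coeff_sub, hX11, leib, hεG, mul_zero, add_zero, sub_eq_zero] at e3
    -- e3 : 1 = constantCoeff Tp * coeff (Finsupp.single 1 1) G
    rcases mul_eq_zero.mp e2 with h | h
    · rw [h, zero_mul] at e3; exact one_ne_zero e3
    · rw [h, mul_zero] at e1; exact one_ne_zero e1
end
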